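/- arXiv:1808.05267 — 10 statements merged into one kernel-verified Lean document; each statement's English description precedes it below -/
import Mathlib

section
/- Let T be a triangulated category, S ⊆ T a pre-aisle, and t, t' objects of T. Then the relation R(t,t') on the class H̃_S(t,t') is an equivalence relation; in particular it is transitive: if (h,h') ∈ R(t,t') and (h',h'') ∈ R(t,t') then (h,h'') ∈ R(t,t'). -/
open CategoryTheory CategoryTheory.Limits CategoryTheory.Pretriangulated ZeroObject

universe v u

variable {C : Type u} [Category.{v} C] [Preadditive C] [HasZeroObject C]
  [HasShift C ℤ] [∀ n : ℤ, (CategoryTheory.shiftFunctor C n).Additive] [Pretriangulated C]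
  [IsTriangulated C]

/-- A pre-aisle in a triangulated category: a full additive subcategory closed under
suspension, extensions and direct summands. -/
structure IsPreaisle (S : Set C) : Prop where
  zero_mem : (0 : C) ∈ S
  shift_mem : ∀ s ∈ S, (s⟦(1 : ℤ)⟧ : C) ∈ S
  ext_mem : ∀ T : Triangle C, T ∈ (distTriang C) → T.obj₁ ∈ S → T.obj₃ ∈ S → T.obj₂ ∈ S
  summand_mem : ∀ x s : C, s ∈ S → ∀ (i : x ⟶ s) (r : s ⟶ x), i ≫ r = 𝟙 x → x ∈ S

/-- The class `H̃_S(t,t')` of pairs of composable morphisms `t ⟶ s ⟶ t'` with `s ∈ S`. -/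
structure HTilde (S : Set C) (t t' : C) where
  s : C
  mem : s ∈ S
  f : t ⟶ s
  g : s ⟶ t'

/-- The relation `R(t,t')` on `H̃_S(t,t')`. -/
def HRel (S : Set C) {t t' : C} (h h' : HTilde S t t') : Prop :=
  ∃ (s'' : C) (_ : s'' ∈ S) (u : h.s ⟶ s'') (u' : h'.s ⟶ s'') (v : s'' ⟶ t'),
    h.f ≫ u = h'.f ≫ u' ∧ u ≫ v = h.g ∧ u' ≫ v = h'.g


lemma sum_mem_of_isPreaisle (S : Set C) (hS : IsPreaisle S) (s₁ s₂ : C)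
    (h₁ : s₁ ∈ S) (h₂ : s₂ ∈ S) : (s₁ ⊞ s₂ : C) ∈ S :=
  hS.ext_mem _ (binaryBiproductTriangle_distinguished s₁ s₂) h₁ h₂

lemma hrel_trans (S : Set C) (hS : IsPreaisle S) {t t' : C}
    (h h' h'' : HTilde S t t') (r₁ : HRel S h h') (r₂ : HRel S h' h'') :
    HRel S h h'' := by
  obtain ⟨s₁, hs₁, u₁, u₁', v₁, e₁, e₂, e₃⟩ := r₁
  obtain ⟨s₂, hs₂, u₂, u₂', v₂, f₁, f₂, f₃⟩ := r₂
  obtain ⟨c, π, δ, mem⟩ :=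
    Pretriangulated.distinguished_cocone_triangle (biprod.lift u₁' (-u₂) : h'.s ⟶ s₁ ⊞ s₂)
  have hc : c ∈ S := by
    refine hS.ext_mem _ (rot_of_distTriang _ mem) ?_ ?_
    · exact sum_mem_of_isPreaisle S hS s₁ s₂ hs₁ hs₂
    · exact hS.shift_mem _ h'.mem
  have hzero : (biprod.lift u₁' (-u₂) : h'.s ⟶ s₁ ⊞ s₂) ≫ π = 0 :=
    Pretriangulated.comp_distTriang_mor_zero₁₂ _ mem
  have hfac : (biprod.lift u₁' (-u₂) : h'.s ⟶ s₁ ⊞ s₂) ≫ biprod.desc v₁ v₂ = 0 := by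
    simp [e₃, f₂]
  obtain ⟨v, hv⟩ : ∃ v : c ⟶ t', biprod.desc v₁ v₂ = π ≫ v :=
    Triangle.yoneda_exact₂ _ mem (biprod.desc v₁ v₂) hfac
  have hππ : u₁' ≫ biprod.inl ≫ π = u₂ ≫ biprod.inr ≫ π := by
    have := hzero
    rw [biprod.lift_eq] at this
    simpa [Preadditive.neg_comp, add_neg_eq_zero] using this
  refine ⟨c, hc, u₁ ≫ biprod.inl ≫ π, u₂' ≫ biprod.inr ≫ π, v, ?_, ?_, ?_⟩
  · rw [← Category.assoc, e₁, Category.assoc, hππ, ← Category.assoc, f₁, Category.assoc]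
  · have : biprod.inl ≫ π ≫ v = v₁ := by
      rw [← hv]; simp
    rw [Category.assoc, Category.assoc] at *
    rw [this] at *
    · exact e₂
  · have : biprod.inr ≫ π ≫ v = v₂ := by
      rw [← hv]; simp
    rw [Category.assoc, Category.assoc, this]
    exact f₃

/-- for a pre-aisle `S`, the relation `R(t,t')` is an equivalence relation;
in particular it is transitive. -/
theorem statement0 (S : Set C) (hS : IsPreaisle S) (t t' : C) :
    Equivalence (HRel S (t := t) (t' := t')) ∧
      ∀ h h' h'' : HTilde S t t', HRel S h h' → HRel S h' h'' → HRel S h h'' := by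
  have refl : ∀ h : HTilde S t t', HRel S h h := fun h =>
    ⟨h.s, h.mem, 𝟙 _, 𝟙 _, h.g, rfl, by simp, by simp⟩
  have symm : ∀ {h h' : HTilde S t t'}, HRel S h h' → HRel S h' h := by
    rintro h h' ⟨s'', hs, u, u', v, e, e1, e2⟩
    exact ⟨s'', hs, u', u, v, e.symm, e2, e1⟩
  exact ⟨⟨refl, symm, fun a b => hrel_trans S hS _ _ _ a b⟩,
    fun h h' h'' => hrel_trans S hS h h' h''⟩
end

section
/- Let T be a triangulated category, S ⊆ T a pre-aisle, and t, t' objects of T. The addition on H_S(t,t') defined on representatives by sending the classes of (t →f s →g t') and (t →f' s' →g' t') to the class of (t →(f,f') s ⊕ s' →(g,g') t') is well defined (independent of the chosen representatives), commutative and associative; the class of (t → 0 → t') is a two-sided identity for it; and the class of (t →f s →g t') plus the class of (t →f s →(−g) t') equals the class of (t → 0 → t'). Hence H_S(t,t') is an abelian group. -/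
open CategoryTheory CategoryTheory.Limits CategoryTheory.Pretriangulated ZeroObject

universe v u

variable {C : Type u} [Category.{v} C] [Preadditive C] [HasZeroObject C]
  [HasShift C ℤ] [∀ n : ℤ, (CategoryTheory.shiftFunctor C n).Additive] [Pretriangulated C]
  [IsTriangulated C]

/-- The quotient `H_S(t,t')` of `H̃_S(t,t')` by the equivalence relation `R(t,t')`. -/
def HQuot (S : Set C) (t t' : C) := Quot (HRel S (t := t) (t' := t'))


lemma IsPreaisle.biprod_mem {S : Set C} (hS : IsPreaisle S) {a b : C}
    (ha : a ∈ S) (hb : b ∈ S) : (a ⊞ b : C) ∈ S :=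
  hS.ext_mem _ (binaryBiproductTriangle_distinguished a b) ha hb

/-- Sum of representatives. -/
noncomputable def hsum {S : Set C} (hS : IsPreaisle S) {t t' : C} (h k : HTilde S t t') : HTilde S t t' :=
  ⟨h.s ⊞ k.s, hS.biprod_mem h.mem k.mem, biprod.lift h.f k.f, biprod.desc h.g k.g⟩

lemma hsum_relL {S : Set C} (hS : IsPreaisle S) {t t' : C} {h h' : HTilde S t t'}
    (k : HTilde S t t') (r : HRel S h h') : HRel S (hsum hS h k) (hsum hS h' k) := by
  obtain ⟨w, hw, u, u', v, h1, h2, h3⟩ := r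
  refine ⟨w ⊞ k.s, hS.biprod_mem hw k.mem, biprod.map u (𝟙 _), biprod.map u' (𝟙 _),
    biprod.desc v k.g, ?_, ?_, ?_⟩ <;>
  · dsimp [hsum]
    ext <;> simp [h1, h2, h3]

lemma hsum_relR {S : Set C} (hS : IsPreaisle S) {t t' : C} (h : HTilde S t t')
    {k k' : HTilde S t t'} (r : HRel S k k') : HRel S (hsum hS h k) (hsum hS h k') := by
  obtain ⟨w, hw, u, u', v, h1, h2, h3⟩ := r
  refine ⟨h.s ⊞ w, hS.biprod_mem h.mem hw, biprod.map (𝟙 _) u, biprod.map (𝟙 _) u',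
    biprod.desc h.g v, ?_, ?_, ?_⟩ <;>
  · dsimp [hsum]
    ext <;> simp [h1, h2, h3]

/-- the addition on `H_S(t,t')` defined via direct sums of representatives is
well defined, commutative and associative, admits the class of `t ⟶ 0 ⟶ t'` as a two-sided
identity, and the class of `(f, g)` plus the class of `(f, -g)` is zero.  Hence `H_S(t,t')`
is an abelian group. -/
theorem statement3 (S : Set C) (hS : IsPreaisle S) (t t' : C) :
    ∃ add : HQuot S t t' → HQuot S t t' → HQuot S t t',
      (∀ h h' : HTilde S t t', ∃ m : (h.s ⊞ h'.s : C) ∈ S,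
        add (Quot.mk _ h) (Quot.mk _ h') =
          Quot.mk _ ⟨h.s ⊞ h'.s, m, biprod.lift h.f h'.f, biprod.desc h.g h'.g⟩) ∧
      (∀ a b, add a b = add b a) ∧
      (∀ a b c, add (add a b) c = add a (add b c)) ∧
      (∀ a, add (Quot.mk _ ⟨0, hS.zero_mem, 0, 0⟩) a = a) ∧
      (∀ a, add a (Quot.mk _ ⟨0, hS.zero_mem, 0, 0⟩) = a) ∧
      (∀ h : HTilde S t t',
        add (Quot.mk _ h) (Quot.mk _ ⟨h.s, h.mem, h.f, -h.g⟩) =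
          Quot.mk _ ⟨0, hS.zero_mem, 0, 0⟩) := by
  refine ⟨Quot.lift (fun h => Quot.lift (fun k => Quot.mk _ (hsum hS h k))
      (fun k k' r => Quot.sound (hsum_relR hS h r)))
      (fun h h' r => ?_), ?_, ?_, ?_, ?_, ?_, ?_⟩
  · funext a
    induction a using Quot.ind with
    | _ k => exact Quot.sound (hsum_relL hS k r)
  · intro h h'
    exact ⟨hS.biprod_mem h.mem h'.mem, rfl⟩
  · -- commutativity
    intro a b
    induction a using Quot.ind with | _ h => ?_
    induction b using Quot.ind with | _ k => ?_
    apply Quot.sound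
    refine ⟨h.s ⊞ k.s, hS.biprod_mem h.mem k.mem, 𝟙 _, biprod.lift biprod.snd biprod.fst,
      biprod.desc h.g k.g, ?_, ?_, ?_⟩ <;>
    · dsimp [hsum]; ext <;> simp
  · -- associativity
    intro a b c
    induction a using Quot.ind with | _ h => ?_
    induction b using Quot.ind with | _ k => ?_
    induction c using Quot.ind with | _ l => ?_
    apply Quot.sound
    refine ⟨(h.s ⊞ k.s) ⊞ l.s, hS.biprod_mem (hS.biprod_mem h.mem k.mem) l.mem, 𝟙 _,
      biprod.lift (biprod.lift biprod.fst (biprod.snd ≫ biprod.fst)) (biprod.snd ≫ biprod.snd),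
      biprod.desc (biprod.desc h.g k.g) l.g, ?_, ?_, ?_⟩ <;>
    · dsimp [hsum]; ext <;> simp
  · -- left identity
    intro a
    induction a using Quot.ind with | _ h => ?_
    apply Quot.sound
    refine ⟨h.s, h.mem, biprod.snd, 𝟙 _, h.g, ?_, ?_, ?_⟩ <;>
    · dsimp -failIfUnchanged [hsum]; try ext
      all_goals simp
  · -- right identity
    intro a
    induction a using Quot.ind with | _ h => ?_
    apply Quot.sound
    refine ⟨h.s, h.mem, biprod.fst, 𝟙 _, h.g, ?_, ?_, ?_⟩ <;>
    · dsimp -failIfUnchanged [hsum]; try ext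
      all_goals simp
  · -- inverse
    intro h
    apply Quot.sound
    refine ⟨h.s, h.mem, biprod.fst - biprod.snd, 0, h.g, ?_, ?_, ?_⟩ <;>
    · dsimp [hsum]
      try ext
      all_goals simp
end

section
/- Let T be a triangulated category, S ⊆ T a pre-aisle, and t an object of T. The assignment x ↦ H_S(x,t), together with the map H_S(e,t) : H_S(y,t) → H_S(x,t) induced for each morphism e : x → y by precomposition of representatives (sending the class of (y →f s →g t) to the class of (x →(f∘e) s →g t)), is a well-defined additive functor from Tᵒᵖ to abelian groups, where each H_S(x,t) carries the abelian group structure on representatives given by direct-sum addition with zero the class of (x → 0 → t). -/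
open CategoryTheory CategoryTheory.Limits CategoryTheory.Pretriangulated ZeroObject

universe v u

variable {C : Type u} [Category.{v} C] [Preadditive C] [HasZeroObject C]
  [HasShift C ℤ] [∀ n : ℤ, (CategoryTheory.shiftFunctor C n).Additive] [Pretriangulated C]
  [IsTriangulated C]

section Statement4Aux

variable (S : Set C)

lemma biprodMem (hS : IsPreaisle S) {s s' : C} (h : s ∈ S) (h' : s' ∈ S) :
    (s ⊞ s' : C) ∈ S :=
  hS.ext_mem _ (binaryBiproductTriangle_distinguished s s') h h'

/-- Direct-sum addition on representatives. -/
noncomputable def addH (hS : IsPreaisle S) {x t : C} (h h' : HTilde S x t) : HTilde S x t :=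
  ⟨h.s ⊞ h'.s, biprodMem S hS h.mem h'.mem, biprod.lift h.f h'.f, biprod.desc h.g h'.g⟩

lemma addH_rel_right (hS : IsPreaisle S) {x t : C} (a : HTilde S x t)
    {b₁ b₂ : HTilde S x t} (hb : HRel S b₁ b₂) :
    HRel S (addH S hS a b₁) (addH S hS a b₂) := by
  obtain ⟨w, wm, u, u', v, h1, h2, h3⟩ := hb
  refine ⟨a.s ⊞ w, biprodMem S hS a.mem wm, biprod.map (𝟙 _) u, biprod.map (𝟙 _) u',
    biprod.desc a.g v, ?_, ?_, ?_⟩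
  · apply biprod.hom_ext <;> simp [addH, h1]
  · apply biprod.hom_ext' <;> simp [addH, h2]
  · apply biprod.hom_ext' <;> simp [addH, h3]

lemma addH_rel_left (hS : IsPreaisle S) {x t : C} {a₁ a₂ : HTilde S x t}
    (ha : HRel S a₁ a₂) (b : HTilde S x t) :
    HRel S (addH S hS a₁ b) (addH S hS a₂ b) := by
  obtain ⟨w, wm, u, u', v, h1, h2, h3⟩ := ha
  refine ⟨w ⊞ b.s, biprodMem S hS wm b.mem, biprod.map u (𝟙 _), biprod.map u' (𝟙 _),
    biprod.desc v b.g, ?_, ?_, ?_⟩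
  · apply biprod.hom_ext <;> simp [addH, h1]
  · apply biprod.hom_ext' <;> simp [addH, h2]
  · apply biprod.hom_ext' <;> simp [addH, h3]

/-- Direct-sum addition on the quotient. -/
noncomputable def addQ (hS : IsPreaisle S) (x t : C) : HQuot S x t → HQuot S x t → HQuot S x t :=
  Quot.map₂ (addH S hS) (fun a _ _ hb => addH_rel_right S hS a hb)
    (fun _ _ b ha => addH_rel_left S hS ha b)

/-- Precomposition on representatives. -/
def mapH {x y t : C} (e : x ⟶ y) (h : HTilde S y t) : HTilde S x t :=
  ⟨h.s, h.mem, e ≫ h.f, h.g⟩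

lemma mapH_rel {x y t : C} (e : x ⟶ y) {h₁ h₂ : HTilde S y t} (hh : HRel S h₁ h₂) :
    HRel S (mapH S e h₁) (mapH S e h₂) := by
  obtain ⟨w, wm, u, u', v, h1, h2, h3⟩ := hh
  exact ⟨w, wm, u, u', v, by simp [mapH, h1], h2, h3⟩

lemma mapH_id {x t : C} (h : HTilde S x t) : mapH S (𝟙 x) h = h := by
  simp [mapH]

lemma mapH_comp {x y z t : C} (e : x ⟶ y) (e' : y ⟶ z) (h : HTilde S z t) :
    mapH S (e ≫ e') h = mapH S e (mapH S e' h) := by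
  simp [mapH]

/-- Precomposition on the quotient. -/
noncomputable def mapQ {x y t : C} (e : x ⟶ y) : HQuot S y t → HQuot S x t :=
  Quot.map (mapH S e) (fun _ _ hh => mapH_rel S e hh)

end Statement4Aux

/-- `x ↦ H_S(x,t)`, with maps induced by precomposition of representatives,
is a well-defined additive functor from `Tᵒᵖ` to abelian groups, each `H_S(x,t)` carrying
the abelian group structure given on representatives by direct-sum addition, with zero the
class of `x ⟶ 0 ⟶ t`. -/
theorem statement4 (S : Set C) (hS : IsPreaisle S) (t : C) :
    ∃ (add : ∀ x : C, HQuot S x t → HQuot S x t → HQuot S x t)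
      (map : ∀ {x y : C}, (x ⟶ y) → (HQuot S y t → HQuot S x t)),
      -- the addition is given on representatives by direct sums
      (∀ (x : C) (h h' : HTilde S x t), ∃ m : (h.s ⊞ h'.s : C) ∈ S,
        add x (Quot.mk _ h) (Quot.mk _ h') =
          Quot.mk _ ⟨h.s ⊞ h'.s, m, biprod.lift h.f h'.f, biprod.desc h.g h'.g⟩) ∧
      -- each `H_S(x,t)` is an abelian group with zero the class of `x ⟶ 0 ⟶ t`
      (∀ (x : C) (a b : HQuot S x t), add x a b = add x b a) ∧
      (∀ (x : C) (a b c : HQuot S x t), add x (add x a b) c = add x a (add x b c)) ∧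
      (∀ (x : C) (a : HQuot S x t), add x (Quot.mk _ ⟨0, hS.zero_mem, 0, 0⟩) a = a) ∧
      (∀ (x : C) (a : HQuot S x t), ∃ b, add x a b = Quot.mk _ ⟨0, hS.zero_mem, 0, 0⟩) ∧
      -- the map induced by `e : x ⟶ y` is well defined, acting on representatives by
      -- precomposition with `e`
      (∀ {x y : C} (e : x ⟶ y) (h : HTilde S y t),
        map e (Quot.mk _ h) = Quot.mk _ ⟨h.s, h.mem, e ≫ h.f, h.g⟩) ∧
      -- functoriality (contravariant)
      (∀ (x : C) (q : HQuot S x t), map (𝟙 x) q = q) ∧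
      (∀ {x y z : C} (e : x ⟶ y) (e' : y ⟶ z) (q : HQuot S z t),
        map (e ≫ e') q = map e (map e' q)) ∧
      -- each induced map is a group homomorphism
      (∀ {x y : C} (e : x ⟶ y) (q q' : HQuot S y t),
        map e (add y q q') = add x (map e q) (map e q')) ∧
      -- the functor is additive
      (∀ {x y : C} (e e' : x ⟶ y) (q : HQuot S y t),
        map (e + e') q = add x (map e q) (map e' q)) := by
  refine ⟨fun x => addQ S hS x t, fun {x y} e => mapQ S e, ?_, ?_, ?_, ?_, ?_, ?_, ?_, ?_, ?_, ?_⟩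
  · intro x h h'
    exact ⟨biprodMem S hS h.mem h'.mem, rfl⟩
  · -- commutativity
    intro x a b
    induction a using Quot.ind with | mk a => ?_
    induction b using Quot.ind with | mk b => ?_
    apply Quot.sound
    refine ⟨a.s ⊞ b.s, biprodMem S hS a.mem b.mem, 𝟙 _, (biprod.braiding b.s a.s).hom,
      biprod.desc a.g b.g, ?_, ?_, ?_⟩
    · apply biprod.hom_ext <;> simp [addH]
    · simp [addH]
    · apply biprod.hom_ext' <;> simp [addH]
  · -- associativity
    intro x a b c
    induction a using Quot.ind with | mk a => ?_
    induction b using Quot.ind with | mk b => ?_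
    induction c using Quot.ind with | mk c => ?_
    apply Quot.sound
    refine ⟨a.s ⊞ (b.s ⊞ c.s), biprodMem S hS a.mem (biprodMem S hS b.mem c.mem),
      biprod.lift (biprod.fst ≫ biprod.fst) (biprod.lift (biprod.fst ≫ biprod.snd) biprod.snd),
      𝟙 _, biprod.desc a.g (biprod.desc b.g c.g), ?_, ?_, ?_⟩
    · apply biprod.hom_ext
      · simp [addH]
      · apply biprod.hom_ext <;> simp [addH]
    · apply biprod.hom_ext'
      · apply biprod.hom_ext' <;> simp [addH]
        · show a.g = (biprod.inl : a.s ⟶ a.s ⊞ b.s) ≫ biprod.inl ≫ biprod.desc (biprod.desc a.g b.g) c.g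
          simp
        · show b.g = (biprod.inr : b.s ⟶ a.s ⊞ b.s) ≫ biprod.inl ≫ biprod.desc (biprod.desc a.g b.g) c.g
          simp
      · simp [addH]
        show c.g = (biprod.inr : c.s ⟶ (a.s ⊞ b.s) ⊞ c.s) ≫ biprod.desc (biprod.desc a.g b.g) c.g
        simp
    · simp [addH]
  · -- zero is a left identity
    intro x a
    induction a using Quot.ind with | mk a => ?_
    apply Quot.sound
    refine ⟨a.s, a.mem, biprod.snd, 𝟙 _, a.g, ?_, ?_, ?_⟩
    · simp [addH]
    · apply biprod.hom_ext' <;> simp [addH]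
    · simp
  · -- inverses
    intro x a
    induction a using Quot.ind with | mk a => ?_
    refine ⟨Quot.mk _ ⟨a.s, a.mem, -a.f, a.g⟩, ?_⟩
    apply Quot.sound
    refine ⟨a.s, a.mem, biprod.fst + biprod.snd, 0, a.g, ?_, ?_, ?_⟩
    · simp [addH, Preadditive.comp_add]
    · apply biprod.hom_ext' <;> simp [addH, Preadditive.add_comp]
    · simp
  · -- map on representatives
    intro x y e h
    rfl
  · -- map id
    intro x q
    induction q using Quot.ind with | mk h => ?_
    exact congrArg (Quot.mk _) (mapH_id S h)
  · -- map comp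
    intro x y z e e' q
    induction q using Quot.ind with | mk h => ?_
    exact congrArg (Quot.mk _) (mapH_comp S e e' h)
  · -- group homomorphism
    intro x y e q q'
    induction q using Quot.ind with | mk h => ?_
    induction q' using Quot.ind with | mk h' => ?_
    apply Quot.sound
    refine ⟨h.s ⊞ h'.s, biprodMem S hS h.mem h'.mem, 𝟙 _, 𝟙 _,
      biprod.desc h.g h'.g, ?_, ?_, ?_⟩
    · apply biprod.hom_ext <;> simp [addH, mapH]
    · simp [addH, mapH]
    · simp [addH, mapH]
  · -- additivity
    intro x y e e' q
    induction q using Quot.ind with | mk h => ?_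
    apply Quot.sound
    refine ⟨h.s, h.mem, 𝟙 _, biprod.fst + biprod.snd, h.g, ?_, ?_, ?_⟩
    · simp [addH, mapH, Preadditive.comp_add, Preadditive.add_comp]
      exact (by simp [Preadditive.comp_add] : e ≫ h.f + e' ≫ h.f = biprod.lift (e ≫ h.f) (e' ≫ h.f) ≫ (biprod.fst + biprod.snd))
    · simp [mapH]
    · apply biprod.hom_ext' <;> simp [addH, mapH, Preadditive.add_comp]
      · exact (by simp [Preadditive.add_comp, Preadditive.comp_add] : (biprod.inl : h.s ⟶ h.s ⊞ h.s) ≫ (biprod.fst + biprod.snd) ≫ h.g = biprod.inl ≫ biprod.desc h.g h.g)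
      · exact (by simp [Preadditive.add_comp, Preadditive.comp_add] : (biprod.inr : h.s ⟶ h.s ⊞ h.s) ≫ (biprod.fst + biprod.snd) ≫ h.g = biprod.inr ≫ biprod.desc h.g h.g)
end

section
/- Let T be a triangulated category, S ⊆ T a pre-aisle, and t an object of T. The additive functor H_S(−,t) : Tᵒᵖ → Ab is homological: for every distinguished triangle x →α y →β z → Σx in T, the induced sequence H_S(z,t) → H_S(y,t) → H_S(x,t) is exact at H_S(y,t). -/
open CategoryTheory CategoryTheory.Limits CategoryTheory.Pretriangulated ZeroObject

universe v u

variable {C : Type u} [Category.{v} C] [Preadditive C] [HasZeroObject C]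
  [HasShift C ℤ] [∀ n : ℤ, (CategoryTheory.shiftFunctor C n).Additive] [Pretriangulated C]
  [IsTriangulated C]

/-- `S` is closed under binary biproducts. -/
lemma IsPreaisle.biprod_mem_s5 {S : Set C} (hS : IsPreaisle S) {s₁ s₂ : C}
    (h₁ : s₁ ∈ S) (h₂ : s₂ ∈ S) : (s₁ ⊞ s₂ : C) ∈ S :=
  hS.ext_mem _ (binaryBiproductTriangle_distinguished s₁ s₂) h₁ h₂

/-- `R(t,t')` is an equivalence relation. -/
lemma hrel_equivalence {S : Set C} (hS : IsPreaisle S) (t t' : C) :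
    Equivalence (HRel S (t := t) (t' := t')) := by
  constructor
  · intro h
    exact ⟨h.s, h.mem, 𝟙 _, 𝟙 _, h.g, rfl, by simp, by simp⟩
  · rintro a b ⟨s'', m, u, u', v, e1, e2, e3⟩
    exact ⟨s'', m, u', u, v, e1.symm, e3, e2⟩
  · rintro a b c ⟨s₁, m₁, u, u', v, e1, e2, e3⟩ ⟨s₂, m₂, w, w', v', f1, f2, f3⟩
    -- homotopy pushout of `u' : b.s ⟶ s₁` and `w : b.s ⟶ s₂`
    obtain ⟨s₃, p, δ, mem⟩ :=
      distinguished_cocone_triangle (biprod.lift u' (-w) : b.s ⟶ s₁ ⊞ s₂)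
    have hs₃ : s₃ ∈ S :=
      hS.ext_mem _ (rot_of_distTriang _ mem) (hS.biprod_mem_s5 m₁ m₂)
        (hS.shift_mem _ b.mem)
    have hzero : biprod.lift u' (-w) ≫ p = 0 := comp_distTriang_mor_zero₁₂ _ mem
    have hcomm : u' ≫ biprod.inl ≫ p = w ≫ biprod.inr ≫ p := by
      have := hzero
      rw [biprod.lift_eq] at this
      simp only [Preadditive.add_comp, Preadditive.neg_comp, Category.assoc] at this
      rw [← sub_eq_zero]
      simpa [sub_eq_add_neg] using this
    obtain ⟨v₃, hv₃⟩ := Triangle.yoneda_exact₂ _ mem (biprod.desc v v') (by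
      show biprod.lift u' (-w) ≫ biprod.desc v v' = 0
      rw [biprod.lift_desc]
      simp [e3, f2])
    obtain ⟨v₃, hv₃⟩ : ∃ v₃' : s₃ ⟶ t', biprod.desc v v' = p ≫ v₃' := ⟨v₃, hv₃⟩
    refine ⟨s₃, hs₃, u ≫ biprod.inl ≫ p, w' ≫ biprod.inr ≫ p, v₃, ?_, ?_, ?_⟩
    · rw [← Category.assoc, e1, Category.assoc, hcomm, ← Category.assoc, f1,
        Category.assoc]
    · have h1 : biprod.inl ≫ p ≫ v₃ = v := by
        rw [← hv₃]; simp
      rw [Category.assoc, Category.assoc] at *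
      rw [h1, e2]
    · have h2 : biprod.inr ≫ p ≫ v₃ = v' := by
        rw [← hv₃]; simp
      rw [Category.assoc, Category.assoc] at *
      rw [h2, f3]

/-- the functor `H_S(-,t)` is homological: for every distinguished triangle
`x ⟶ y ⟶ z ⟶ Σx`, the sequence `H_S(z,t) ⟶ H_S(y,t) ⟶ H_S(x,t)` is exact at `H_S(y,t)`:
the image of the map induced by `β : y ⟶ z` is the kernel of the map induced by
`α : x ⟶ y`. -/
theorem statement5 (S : Set C) (hS : IsPreaisle S) (t : C)
    (T : Triangle C) (hT : T ∈ (distTriang C)) :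
    ∃ (mapα : HQuot S T.obj₂ t → HQuot S T.obj₁ t)
      (mapβ : HQuot S T.obj₃ t → HQuot S T.obj₂ t),
      -- the two maps are induced by precomposition of representatives with `α` and `β`
      (∀ h : HTilde S T.obj₂ t,
        mapα (Quot.mk _ h) = Quot.mk _ ⟨h.s, h.mem, T.mor₁ ≫ h.f, h.g⟩) ∧
      (∀ h : HTilde S T.obj₃ t,
        mapβ (Quot.mk _ h) = Quot.mk _ ⟨h.s, h.mem, T.mor₂ ≫ h.f, h.g⟩) ∧
      -- exactness at `H_S(y,t)`
      (∀ q : HQuot S T.obj₂ t,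
        mapα q = Quot.mk _ ⟨0, hS.zero_mem, 0, 0⟩ ↔ ∃ p, mapβ p = q) := by
  refine ⟨Quot.lift (fun h => Quot.mk _ ⟨h.s, h.mem, T.mor₁ ≫ h.f, h.g⟩) ?_,
    Quot.lift (fun h => Quot.mk _ ⟨h.s, h.mem, T.mor₂ ≫ h.f, h.g⟩) ?_, fun _ => rfl,
    fun _ => rfl, ?_⟩
  · rintro a b ⟨s'', m, u, u', v, e1, e2, e3⟩
    exact Quot.sound ⟨s'', m, u, u', v, by
      simp only [Category.assoc]; rw [e1], e2, e3⟩
  · rintro a b ⟨s'', m, u, u', v, e1, e2, e3⟩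
    exact Quot.sound ⟨s'', m, u, u', v, by
      simp only [Category.assoc]; rw [e1], e2, e3⟩
  · intro q
    obtain ⟨h, rfl⟩ := Quot.exists_rep q
    constructor
    · intro hq
      change Quot.mk _ _ = Quot.mk _ _ at hq
      rw [Quot.eq, Equivalence.eqvGen_iff (hrel_equivalence hS _ _)] at hq
      obtain ⟨s₀, m₀, u, u', v, e1, e2, e3⟩ := hq
      simp only [zero_comp] at e1
      have : T.mor₁ ≫ (h.f ≫ u) = 0 := by
        rw [← Category.assoc]; simpa using e1
      obtain ⟨k, hk⟩ := Triangle.yoneda_exact₂ _ hT (h.f ≫ u) this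
      refine ⟨Quot.mk _ ⟨s₀, m₀, k, v⟩, ?_⟩
      dsimp only
      apply Quot.sound
      exact ⟨s₀, m₀, 𝟙 s₀, u, v, by rw [Category.comp_id, ← hk], by simp, e2⟩
    · rintro ⟨p, hp⟩
      obtain ⟨h', rfl⟩ := Quot.exists_rep p
      rw [← hp]
      dsimp only
      apply Quot.sound
      refine ⟨h'.s, h'.mem, 𝟙 _, 0, h'.g, ?_, by simp, by simp⟩
      rw [← Category.assoc, comp_distTriang_mor_zero₁₂ _ hT]
      simp
end

section
/- Let T be a triangulated category with coproducts, let S ⊆ T be a pre-aisle that is closed in T under coproducts, and let t be an object of T. Then the functor H_S(−,t) : Tᵒᵖ → Ab respects products: for every set {x_λ, λ ∈ Λ} of objects of T, the natural map H_S(∐_{λ∈Λ} x_λ, t) → ∏_{λ∈Λ} H_S(x_λ, t) induced by the coproduct injections is an isomorphism. -/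
open CategoryTheory CategoryTheory.Limits CategoryTheory.Pretriangulated ZeroObject

universe v u

variable {C : Type u} [Category.{v} C] [Preadditive C] [HasZeroObject C]
  [HasShift C ℤ] [∀ n : ℤ, (CategoryTheory.shiftFunctor C n).Additive] [Pretriangulated C]
  [IsTriangulated C]

/-- Membership in a pre-aisle is invariant under isomorphism. -/
lemma IsPreaisle.iso_mem {S : Set C} (hS : IsPreaisle S) {x s : C} (e : x ≅ s) (hs : s ∈ S) :
    x ∈ S :=
  hS.summand_mem x s hs e.hom e.inv e.hom_inv_id

/-- The cone of a morphism whose source has its shift in the pre-aisle and whose target is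
in the pre-aisle belongs to the pre-aisle. -/
lemma IsPreaisle.cone_mem {S : Set C} (hS : IsPreaisle S) {T : Triangle C}
    (hT : T ∈ distTriang C) (h1 : (T.obj₁⟦(1 : ℤ)⟧ : C) ∈ S) (h2 : T.obj₂ ∈ S) :
    T.obj₃ ∈ S :=
  hS.ext_mem T.rotate (rot_of_distTriang T hT) h2 h1

/-- Two morphisms into an object of a pre-aisle which are equalized by a morphism to `t`
can be coequalized inside the pre-aisle, compatibly with the morphism to `t`. -/
lemma IsPreaisle.coeq {S : Set C} (hS : IsPreaisle S) {s₁ s₂ t : C}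
    (h₁ : s₁ ∈ S) (h₂ : s₂ ∈ S) (u v : s₁ ⟶ s₂) (g : s₂ ⟶ t) (huv : u ≫ g = v ≫ g) :
    ∃ (s₃ : C) (_ : s₃ ∈ S) (w : s₂ ⟶ s₃) (g₃ : s₃ ⟶ t),
      u ≫ w = v ≫ w ∧ w ≫ g₃ = g := by
  obtain ⟨s₃, w, δ, mem⟩ := distinguished_cocone_triangle (u - v)
  have h₃ : s₃ ∈ S := hS.cone_mem mem (hS.shift_mem _ h₁) h₂
  have hzero : (u - v) ≫ w = 0 := comp_distTriang_mor_zero₁₂ _ mem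
  rw [Preadditive.sub_comp, sub_eq_zero] at hzero
  obtain ⟨g₃, hg₃⟩ := Triangle.yoneda_exact₂ _ mem g
    (by change (u - v) ≫ g = 0; rw [Preadditive.sub_comp, huv, sub_self])
  exact ⟨s₃, h₃, w, g₃, hzero, hg₃.symm⟩

/-- The relation `R(t,t')` is an equivalence relation. -/
lemma HRel.equivalence (S : Set C) (hS : IsPreaisle S) (t t' : C) :
    Equivalence (HRel S (t := t) (t' := t')) := by
  constructor
  · intro h
    exact ⟨h.s, h.mem, 𝟙 _, 𝟙 _, h.g, rfl, Category.id_comp _, Category.id_comp _⟩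
  · rintro h h' ⟨a, ha, u, u', v, e1, e2, e3⟩
    exact ⟨a, ha, u', u, v, e1.symm, e3, e2⟩
  · rintro h₁ h₂ h₃ ⟨a, ha, u, u', va, e1, e2, e3⟩ ⟨b, hb, w', w'', vb, f1, f2, f3⟩
    -- coequalize `u' ≫ inl` and `w' ≫ inr : h₂.s ⟶ a ⊞ b` over `t'`
    obtain ⟨s₃, h₃mem, w, g₃, hw, hg₃⟩ := hS.coeq h₂.mem (hS.biprod_mem ha hb)
      (u' ≫ biprod.inl) (w' ≫ biprod.inr) (biprod.desc va vb)
      (by simp [e3, f2])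
    refine ⟨s₃, h₃mem, u ≫ biprod.inl ≫ w, w'' ≫ biprod.inr ≫ w, g₃, ?_, ?_, ?_⟩
    · calc h₁.f ≫ u ≫ biprod.inl ≫ w
          = ((h₁.f ≫ u) ≫ biprod.inl) ≫ w := by simp only [Category.assoc]
        _ = ((h₂.f ≫ u') ≫ biprod.inl) ≫ w := by rw [e1]
        _ = h₂.f ≫ (u' ≫ biprod.inl) ≫ w := by simp only [Category.assoc]
        _ = h₂.f ≫ (w' ≫ biprod.inr) ≫ w := by rw [hw]
        _ = ((h₂.f ≫ w') ≫ biprod.inr) ≫ w := by simp only [Category.assoc]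
        _ = ((h₃.f ≫ w'') ≫ biprod.inr) ≫ w := by rw [f1]
        _ = h₃.f ≫ w'' ≫ biprod.inr ≫ w := by simp only [Category.assoc]
    · rw [Category.assoc, Category.assoc, hg₃]
      simp [e2]
    · rw [Category.assoc, Category.assoc, hg₃]
      simp [f3]

/-- if `T` has coproducts and the pre-aisle `S` is closed under coproducts,
then `H_S(-,t)` takes coproducts to products: the natural map
`H_S(∐ x_λ, t) ⟶ ∏ H_S(x_λ, t)` induced by the coproduct injections is an isomorphism. -/
theorem statement6 [HasCoproducts.{v} C] (S : Set C) (hS : IsPreaisle S)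
    (hScoprod : ∀ {ι : Type v} (xs : ι → C), (∀ i, xs i ∈ S) → (∐ xs : C) ∈ S)
    (t : C) {Λ : Type v} (x : Λ → C) :
    ∃ maps : ∀ l : Λ, HQuot S (∐ x) t → HQuot S (x l) t,
      -- the `λ`-component is induced by precomposition with the injection `x_λ ⟶ ∐ x_λ`
      (∀ (l : Λ) (h : HTilde S (∐ x) t),
        maps l (Quot.mk _ h) = Quot.mk _ ⟨h.s, h.mem, Sigma.ι x l ≫ h.f, h.g⟩) ∧
      Function.Bijective (fun (q : HQuot S (∐ x) t) (l : Λ) => maps l q) := by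
  have equiv := fun (t₀ : C) => HRel.equivalence S hS t₀ t
  have sound_iff : ∀ (t₀ : C) (h h' : HTilde S t₀ t),
      (Quot.mk _ h : HQuot S t₀ t) = Quot.mk _ h' ↔ HRel S h h' := by
    intro t₀ h h'
    constructor
    · intro hq
      exact ((equiv t₀).eqvGen_iff).mp (Quot.eqvGen_exact hq)
    · exact Quot.sound
  refine ⟨fun l => Quot.lift
      (fun h => Quot.mk _ ⟨h.s, h.mem, Sigma.ι x l ≫ h.f, h.g⟩)
      (fun h h' ⟨a, ha, u, u', v, e1, e2, e3⟩ =>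
        Quot.sound ⟨a, ha, u, u', v, by simp only [Category.assoc, e1], e2, e3⟩),
    fun l h => rfl, ?_, ?_⟩
  · -- injectivity
    intro q q' hqq'
    obtain ⟨h, rfl⟩ := Quot.exists_rep q
    obtain ⟨h', rfl⟩ := Quot.exists_rep q'
    -- replace the two representatives by ones with the same `s` and `g`
    set b : C := h.s ⊞ h'.s with hb
    have hbmem : b ∈ S := hS.biprod_mem h.mem h'.mem
    set G : b ⟶ t := biprod.desc h.g h'.g with hG
    set F : (∐ x : C) ⟶ b := h.f ≫ biprod.inl with hF
    set F' : (∐ x : C) ⟶ b := h'.f ≫ biprod.inr with hF'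
    have hq1 : (Quot.mk _ h : HQuot S (∐ x) t) = Quot.mk _ ⟨b, hbmem, F, G⟩ :=
      Quot.sound ⟨b, hbmem, biprod.inl, 𝟙 b, G, by simp [hF], by simp [hG], by simp⟩
    have hq2 : (Quot.mk _ h' : HQuot S (∐ x) t) = Quot.mk _ ⟨b, hbmem, F', G⟩ :=
      Quot.sound ⟨b, hbmem, biprod.inr, 𝟙 b, G, by simp [hF'], by simp [hG], by simp⟩
    rw [hq1, hq2]
    rw [hq1, hq2] at hqq'
    -- for each `l`, extract the witnesses of the componentwise relation
    have hcomp : ∀ l : Λ, HRel S (⟨b, hbmem, Sigma.ι x l ≫ F, G⟩ : HTilde S (x l) t)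
        ⟨b, hbmem, Sigma.ι x l ≫ F', G⟩ := by
      intro l
      exact ((sound_iff (x l) _ _).mp (congrFun hqq' l))
    -- coequalize the two witnesses over `t`, for each `l`
    have hU : ∀ l : Λ, ∃ (s₃ : C) (_ : s₃ ∈ S) (U : b ⟶ s₃) (g₃ : s₃ ⟶ t),
        Sigma.ι x l ≫ (F - F') ≫ U = 0 ∧ U ≫ g₃ = G := by
      intro l
      obtain ⟨a, ha, u, u', v, e1, e2, e3⟩ := hcomp l
      obtain ⟨s₃, h₃, w, g₃, hw, hg₃⟩ := hS.coeq hbmem ha u u' v (by rw [e2, e3])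
      refine ⟨s₃, h₃, u ≫ w, g₃, ?_, by rw [Category.assoc, hg₃]; exact e2⟩
      dsimp only at e1
      simp only [Preadditive.sub_comp, Preadditive.comp_sub, sub_eq_zero]
      calc Sigma.ι x l ≫ F ≫ u ≫ w
          = ((Sigma.ι x l ≫ F) ≫ u) ≫ w := by simp only [Category.assoc]
        _ = ((Sigma.ι x l ≫ F') ≫ u') ≫ w := by rw [e1]
        _ = (Sigma.ι x l ≫ F') ≫ u' ≫ w := by simp only [Category.assoc]
        _ = (Sigma.ι x l ≫ F') ≫ u ≫ w := by rw [hw]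
        _ = Sigma.ι x l ≫ F' ≫ u ≫ w := by simp only [Category.assoc]
    choose s₃ h₃mem U g₃ hdU hUg using hU
    -- take the fiber of each `U l`
    have hfib : ∀ l : Λ, ∃ (y : C) (al : y ⟶ b) (el : x l ⟶ y),
        ((y⟦(1 : ℤ)⟧ : C) ∈ S) ∧ al ≫ U l = 0 ∧ al ≫ G = 0 ∧
          Sigma.ι x l ≫ (F - F') = el ≫ al := by
      intro l
      obtain ⟨y, al, δ, mem⟩ := distinguished_cocone_triangle₁ (U l)
      have hy : (y⟦(1 : ℤ)⟧ : C) ∈ S := by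
        have := hS.ext_mem (Triangle.mk al (U l) δ).rotate.rotate
          (rot_of_distTriang _ (rot_of_distTriang _ mem)) (h₃mem l) (hS.shift_mem _ hbmem)
        exact this
      have hz : al ≫ U l = 0 := comp_distTriang_mor_zero₁₂ _ mem
      obtain ⟨el, hel⟩ := Triangle.coyoneda_exact₂ _ mem (Sigma.ι x l ≫ (F - F'))
        (by change (Sigma.ι x l ≫ (F - F')) ≫ U l = 0; rw [Category.assoc, hdU])
      refine ⟨y, al, el, hy, hz, ?_, hel⟩
      rw [← hUg l, ← Category.assoc, hz, zero_comp]
    choose y al el hy hzU hzG hfac using hfib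
    -- the coproduct of the fibers and its shift
    have hsy : (((∐ y : C))⟦(1 : ℤ)⟧ : C) ∈ S := by
      have h1 : (∐ fun l => ((y l)⟦(1 : ℤ)⟧ : C) : C) ∈ S := hScoprod _ hy
      exact hS.iso_mem (asIso (sigmaComparison (shiftFunctor C (1 : ℤ)) y)).symm h1
    set A : (∐ y : C) ⟶ b := Sigma.desc al with hA
    have hdfac : F - F' = (Sigma.desc fun l => el l ≫ Sigma.ι y l) ≫ A := by
      apply colimit.hom_ext
      rintro ⟨l⟩
      rw [show colimit.ι (Discrete.functor x) ⟨l⟩ = Sigma.ι x l from rfl, hfac l]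
      simp [hA]
    -- the cone of `A` coequalizes `F` and `F'` over `t`
    obtain ⟨sst, Ub, δ, mem⟩ := distinguished_cocone_triangle A
    have hsst : sst ∈ S := hS.cone_mem mem hsy hbmem
    have hAU : A ≫ Ub = 0 := comp_distTriang_mor_zero₁₂ _ mem
    have hFU : F ≫ Ub = F' ≫ Ub := by
      rw [← sub_eq_zero, ← Preadditive.sub_comp, hdfac, Category.assoc, hAU, comp_zero]
    have hAG : A ≫ G = 0 := by
      apply colimit.hom_ext
      rintro ⟨l⟩
      rw [show colimit.ι (Discrete.functor y) ⟨l⟩ = Sigma.ι y l from rfl]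
      rw [← Category.assoc, comp_zero]
      simp [hA, hzG l]
    obtain ⟨vst, hvst⟩ := Triangle.yoneda_exact₂ _ mem G hAG
    exact Quot.sound ⟨sst, hsst, Ub, Ub, vst, hFU, hvst.symm, hvst.symm⟩
  · -- surjectivity
    intro q
    set h : ∀ l : Λ, HTilde S (x l) t := fun l => (q l).out with hh
    refine ⟨Quot.mk _ ⟨∐ fun l => (h l).s, hScoprod _ (fun l => (h l).mem),
      Sigma.desc (fun l => (h l).f ≫ Sigma.ι (fun l => (h l).s) l), Sigma.desc (fun l => (h l).g)⟩, ?_⟩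
    funext l
    dsimp only
    rw [← Quot.out_eq (q l)]
    apply Quot.sound
    refine ⟨∐ fun l => (h l).s, hScoprod _ (fun l => (h l).mem),
      𝟙 _, Sigma.ι (fun l => (h l).s) l, Sigma.desc (fun l => (h l).g), ?_, ?_, ?_⟩
    · simp; rfl
    · simp
    · simp; rfl
end

section
/- Let T be a triangulated category with a t-structure (T^{≤0}, T^{≥0}) and put S = T^{≤0}. Then for all objects t, t' of T, the class H_S(t,t') is canonically isomorphic to Hom(t, (t')^{≤0}), where (t')^{≤0} → t' is the t-structure truncation: every class in H_S(t,t') has a unique representative of the form t →f (t')^{≤0} → t' with the second map the canonical truncation morphism. -/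
open CategoryTheory CategoryTheory.Limits CategoryTheory.Pretriangulated ZeroObject

universe v u

variable {C : Type u} [Category.{v} C] [Preadditive C] [HasZeroObject C]
  [HasShift C ℤ] [∀ n : ℤ, (CategoryTheory.shiftFunctor C n).Additive] [Pretriangulated C]
  [IsTriangulated C]

/-- for the pre-aisle `S = T^{≤0}` of a t-structure, `H_S(t,t')` is canonically
isomorphic to `Hom(t, (t')^{≤0})`: every class has a unique representative of the form
`t ⟶ (t')^{≤0} ⟶ t'` whose second map is the canonical truncation morphism. -/
theorem statement7 (τ : Triangulated.TStructure C) (t t' : C)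
    (tle : C) (hle : τ.le 0 tle) (tge : C) (hge : τ.ge 1 tge)
    (i : tle ⟶ t') (p : t' ⟶ tge) (d : tge ⟶ tle⟦(1 : ℤ)⟧)
    (hT : Triangle.mk i p d ∈ (distTriang C)) :
    ∀ q : HQuot {x : C | τ.le 0 x} t t',
      ∃! f : t ⟶ tle, q = Quot.mk _ ⟨tle, hle, f, i⟩ := by
  classical
  -- unique lifting along `i` for any object in `LE 0`
  have hlift : ∀ (s : C), τ.le 0 s → ∀ (g : s ⟶ t'), ∃! l : s ⟶ tle, l ≫ i = g := by
    intro s hs g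
    have hzero : g ≫ p = 0 := τ.zero' (g ≫ p) hs hge
    obtain ⟨l, hl⟩ : ∃ l : s ⟶ tle, g = l ≫ i := Triangle.coyoneda_exact₂ _ hT g hzero
    refine ⟨l, hl.symm, ?_⟩
    intro l' hl'
    have hsub : (l' - l) ≫ (Triangle.mk i p d).invRotate.mor₂ = 0 := by
      show (l' - l) ≫ i = 0
      rw [Preadditive.sub_comp, hl', ← hl, sub_self]
    obtain ⟨e, he⟩ : ∃ e : s ⟶ tge⟦(-1 : ℤ)⟧,
        l' - l = e ≫ (Triangle.mk i p d).invRotate.mor₁ :=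
      Triangle.coyoneda_exact₂ _ (inv_rot_of_distTriang _ hT) (l' - l) hsub
    have hge2 : τ.ge 1 (tge⟦(-1 : ℤ)⟧) :=
      τ.ge_antitone (by omega : (1 : ℤ) ≤ 2) _ (τ.ge_shift 1 (-1) 2 (by omega) tge hge)
    have : e = 0 := τ.zero' e hs hge2
    have : l' - l = 0 := by rw [he, this]; exact Limits.zero_comp
    rw [sub_eq_zero] at this
    exact this
  set S : Set C := {x : C | τ.le 0 x} with hS
  let L : ∀ (h : HTilde S t t'), h.s ⟶ tle := fun h => (hlift h.s h.mem h.g).choose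
  have hL : ∀ h, L h ≫ i = h.g := fun h => (hlift h.s h.mem h.g).choose_spec.1
  have hLu : ∀ (h : HTilde S t t') (l : h.s ⟶ tle), l ≫ i = h.g → l = L h :=
    fun h l hl => (hlift h.s h.mem h.g).choose_spec.2 l hl
  let φ0 : HTilde S t t' → (t ⟶ tle) := fun h => h.f ≫ L h
  have hφ0 : ∀ h h', HRel S h h' → φ0 h = φ0 h' := by
    rintro h h' ⟨s'', hs'', u, u', v, h1, h2, h3⟩
    obtain ⟨lv, hlv, -⟩ := hlift s'' hs'' v
    have e1 : u ≫ lv = L h := hLu h _ (by rw [Category.assoc, hlv, h2])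
    have e2 : u' ≫ lv = L h' := hLu h' _ (by rw [Category.assoc, hlv, h3])
    show h.f ≫ L h = h'.f ≫ L h'
    rw [← e1, ← e2, ← Category.assoc, ← Category.assoc, h1]
  let φ : HQuot S t t' → (t ⟶ tle) := Quot.lift φ0 hφ0
  have key : ∀ q : HQuot S t t', q = Quot.mk _ ⟨tle, hle, φ q, i⟩ := by
    refine Quot.ind ?_
    intro h
    refine Quot.sound ?_
    exact ⟨tle, hle, L h, 𝟙 tle, i, (Category.comp_id _).symm, hL h, Category.id_comp i⟩
  intro q
  refine ⟨φ q, key q, ?_⟩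
  intro f' hf'
  have h1 : φ q = φ0 ⟨tle, hle, f', i⟩ := by rw [hf']
  have h2 : (𝟙 tle : tle ⟶ tle) = L ⟨tle, hle, f', i⟩ := hLu ⟨tle, hle, f', i⟩ (𝟙 tle) (by rw [Category.id_comp])
  rw [h1]
  show f' = f' ≫ L ⟨tle, hle, f', i⟩
  rw [← h2, Category.comp_id]
end

section
/- Let T be a triangulated category, S ⊆ T a pre-aisle, t an object of T, and suppose there is an isomorphism of functors Hom(−,x) ≅ H_S(−,t) for some object x of T. Then x belongs to S. -/
open CategoryTheory CategoryTheory.Limits CategoryTheory.Pretriangulated ZeroObject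

universe v u

variable {C : Type u} [Category.{v} C] [Preadditive C] [HasZeroObject C]
  [HasShift C ℤ] [∀ n : ℤ, (CategoryTheory.shiftFunctor C n).Additive] [Pretriangulated C]
  [IsTriangulated C]

/-- if `Hom(-,x) ≅ H_S(-,t)` as functors (a natural family of bijections,
where `H_S(-,t)` acts on morphisms by precomposing representatives), then `x ∈ S`. -/
theorem statement8 (S : Set C) (hS : IsPreaisle S) (t x : C)
    (φ : ∀ y : C, (y ⟶ x) → HQuot S y t)
    (hbij : ∀ y : C, Function.Bijective (φ y))
    (hnat : ∀ {y' y : C} (e : y' ⟶ y) (g : y ⟶ x) (h : HTilde S y t),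
      φ y g = Quot.mk _ h → φ y' (e ≫ g) = Quot.mk _ ⟨h.s, h.mem, e ≫ h.f, h.g⟩) :
    x ∈ S := by
  -- representative of the universal element φ x (𝟙 x)
  obtain ⟨h₀, hh₀⟩ := Quot.exists_rep (φ x (𝟙 x))
  obtain ⟨s, hs, f, g⟩ := h₀
  -- step 2: φ y e = [⟨s, e ≫ f, g⟩] for all e : y ⟶ x
  have step2 : ∀ {y : C} (e : y ⟶ x),
      φ y e = Quot.mk _ ⟨s, hs, e ≫ f, g⟩ := by
    intro y e
    have := hnat e (𝟙 x) ⟨s, hs, f, g⟩ hh₀.symm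
    simpa using this
  -- step 3: surjectivity gives r : s ⟶ x hitting [⟨s, 𝟙 s, g⟩]
  obtain ⟨r, hr⟩ := (hbij s).2 (Quot.mk _ ⟨s, hs, 𝟙 s, g⟩)
  have key : Quot.mk (HRel S) (⟨s, hs, r ≫ f, g⟩ : HTilde S s t)
      = Quot.mk _ ⟨s, hs, 𝟙 s, g⟩ := (step2 r).symm.trans hr
  -- precomposition preserves EqvGen of HRel
  have precomp : ∀ {y y' : C} (e : y' ⟶ y) (a b : HTilde S y t),
      Relation.EqvGen (HRel S) a b →
      Relation.EqvGen (HRel S) ⟨a.s, a.mem, e ≫ a.f, a.g⟩ ⟨b.s, b.mem, e ≫ b.f, b.g⟩ := by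
    intro y y' e a b hab
    induction hab with
    | rel p q hpq =>
        obtain ⟨s'', hs'', u, u', v, h1, h2, h3⟩ := hpq
        exact Relation.EqvGen.rel _ _ ⟨s'', hs'', u, u', v, by
          simp only [Category.assoc, h1], h2, h3⟩
    | refl p => exact Relation.EqvGen.refl _
    | symm p q _ ih => exact Relation.EqvGen.symm _ _ ih
    | trans p q r _ _ ih1 ih2 => exact Relation.EqvGen.trans _ _ _ ih1 ih2
  have keq : Relation.EqvGen (HRel S) (⟨s, hs, f ≫ (r ≫ f), g⟩ : HTilde S x t)
      ⟨s, hs, f ≫ 𝟙 s, g⟩ := precomp f _ _ (Quot.eqvGen_exact key)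
  have : φ x (f ≫ r) = φ x (𝟙 x) := by
    rw [step2 (f ≫ r)]
    calc Quot.mk (HRel S) (⟨s, hs, (f ≫ r) ≫ f, g⟩ : HTilde S x t)
        = Quot.mk _ ⟨s, hs, f ≫ (r ≫ f), g⟩ := by rw [Category.assoc]
      _ = Quot.mk _ ⟨s, hs, f ≫ 𝟙 s, g⟩ := Quot.eqvGen_sound keq
      _ = Quot.mk _ ⟨s, hs, f, g⟩ := by rw [Category.comp_id]
      _ = (show Quot (HRel S) from φ x (𝟙 x)) := hh₀
  exact hS.summand_mem x s hs f r ((hbij x).1 this)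
end

section
/- Let T be a triangulated category and S ⊆ T a pre-aisle. Then S equals T^{≤0} for some t-structure (T^{≤0}, T^{≥0}) on T if and only if, for every object t of T, the functor H_S(−,t) : Tᵒᵖ → Ab is representable. -/
open CategoryTheory CategoryTheory.Limits CategoryTheory.Pretriangulated ZeroObject

universe v u

variable {C : Type u} [Category.{v} C] [Preadditive C] [HasZeroObject C]
  [HasShift C ℤ] [∀ n : ℤ, (CategoryTheory.shiftFunctor C n).Additive] [Pretriangulated C]
  [IsTriangulated C]

namespace Statement11Aux

variable {S : Set C}

lemma mem_of_iso (hS : IsPreaisle S) {x y : C} (e : x ≅ y) (hy : y ∈ S) : x ∈ S :=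
  hS.summand_mem x y hy e.hom e.inv e.hom_inv_id

lemma biprod_mem (hS : IsPreaisle S) {a b : C} (ha : a ∈ S) (hb : b ∈ S) : (a ⊞ b : C) ∈ S :=
  hS.ext_mem _ (binaryBiproductTriangle_distinguished a b) ha hb

/-- `R(t,t')` is an equivalence relation. -/
lemma hrel_equivalence (hS : IsPreaisle S) (t t' : C) :
    Equivalence (HRel S (t := t) (t' := t')) := by
  constructor
  · intro h
    exact ⟨h.s, h.mem, 𝟙 _, 𝟙 _, h.g, rfl, Category.id_comp _, Category.id_comp _⟩
  · rintro h h' ⟨s'', hs'', u, u', v, w1, w2, w3⟩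
    exact ⟨s'', hs'', u', u, v, w1.symm, w3, w2⟩
  · rintro h₁ h₂ h₃ ⟨sa, hsa, u₁, u₁', v₁, a1, a2, a3⟩ ⟨sb, hsb, u₂, u₂', v₂, b1, b2, b3⟩
    obtain ⟨w, π, δ, memw⟩ :=
      distinguished_cocone_triangle (biprod.lift u₁' (-u₂) : h₂.s ⟶ sa ⊞ sb)
    have hwS : w ∈ S := by
      refine hS.ext_mem (Triangle.mk (biprod.lift u₁' (-u₂)) π δ).rotate
        (rot_of_distTriang _ memw) (biprod_mem hS hsa hsb) (hS.shift_mem _ h₂.mem)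
    have hcomp : biprod.lift u₁' (-u₂) ≫ π = 0 := comp_distTriang_mor_zero₁₂ _ memw
    have hkey : u₁' ≫ biprod.inl ≫ π = u₂ ≫ biprod.inr ≫ π := by
      have h := hcomp
      rw [biprod.lift_eq] at h
      simpa [Preadditive.add_comp, Preadditive.neg_comp, Category.assoc,
        add_neg_eq_zero] using h
    have hdesc : biprod.lift u₁' (-u₂) ≫ biprod.desc v₁ v₂ = 0 := by
      rw [biprod.lift_desc, a3, Preadditive.neg_comp, b2, add_neg_cancel]
    obtain ⟨vw, hvw⟩ : ∃ vw : w ⟶ t', biprod.desc v₁ v₂ = π ≫ vw :=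
      Triangle.yoneda_exact₂ _ memw (biprod.desc v₁ v₂) hdesc
    replace hvw : biprod.desc v₁ v₂ = π ≫ vw := hvw
    refine ⟨w, hwS, u₁ ≫ biprod.inl ≫ π, u₂' ≫ biprod.inr ≫ π, vw, ?_, ?_, ?_⟩
    · rw [← Category.assoc, a1, Category.assoc, hkey, ← Category.assoc, b1, Category.assoc]
    · have : biprod.inl ≫ π ≫ vw = v₁ := by
        rw [← hvw, biprod.inl_desc]
      rw [Category.assoc, Category.assoc, this, a2]
    · have : biprod.inr ≫ π ≫ vw = v₂ := by
        rw [← hvw, biprod.inr_desc]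
      rw [Category.assoc, Category.assoc, this, b3]

lemma hquot_exact (hS : IsPreaisle S) {t t' : C} {h h' : HTilde S t t'}
    (e : (Quot.mk _ h : HQuot S t t') = Quot.mk _ h') : HRel S h h' :=
  (hrel_equivalence hS t t').eqvGen_iff.1 (Quot.eqvGen_exact e)

/-- If `x ⟶ t ⟶ z ⟶ x⟦1⟧` is distinguished and every map from `S` to `z` vanishes, then
for every `w ∈ S` composition with `α : x ⟶ t` is a bijection `Hom(w,x) ≃ Hom(w,t)`. -/
lemma bij_of_orthogonal (hS : IsPreaisle S) {x t z : C} {α : x ⟶ t} {β : t ⟶ z}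
    {γ : z ⟶ x⟦(1 : ℤ)⟧} (mem : Triangle.mk α β γ ∈ distTriang C)
    (hz : ∀ w ∈ S, ∀ c : w ⟶ z, c = 0) {w : C} (hw : w ∈ S) :
    Function.Bijective (fun g : w ⟶ x => g ≫ α) := by
  constructor
  · intro g g' hgg'
    simp only at hgg'
    rw [← sub_eq_zero]
    have hk : (g - g') ≫ α = 0 := by
      rw [Preadditive.sub_comp, hgg', sub_self]
    obtain ⟨p, hp⟩ := Triangle.coyoneda_exact₂ _ (inv_rot_of_distTriang _ mem) (g - g') hk
    have hp0 : p = 0 := by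
      have e := (shiftFunctorCompIsoId C (-1 : ℤ) (1 : ℤ) (neg_add_cancel 1)).app z
      have h0 := hz _ (hS.shift_mem w hw) ((shiftFunctor C (1 : ℤ)).map p ≫ e.hom)
      apply (shiftFunctor C (1 : ℤ)).map_injective
      rw [Functor.map_zero,
        show (shiftFunctor C (1 : ℤ)).map p
          = ((shiftFunctor C (1 : ℤ)).map p ≫ e.hom) ≫ e.inv by
            erw [Category.assoc, e.hom_inv_id, Category.comp_id], h0, zero_comp]
      rfl
    rw [hp, hp0, zero_comp]
    rfl
  · intro c
    obtain ⟨g, hg⟩ := Triangle.coyoneda_exact₂ _ mem c (hz w hw (c ≫ β))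
    exact ⟨g, hg.symm⟩

/-- Given `α : x ⟶ t` with `x ∈ S` inducing bijections `Hom(w,x) ≃ Hom(w,t)` for `w ∈ S`,
any cone `z` of `α` is right orthogonal to `S`. -/
lemma exists_orth_triangle (hS : IsPreaisle S) {x t : C} (α : x ⟶ t) (hx : x ∈ S)
    (hbij : ∀ w ∈ S, Function.Bijective (fun g : w ⟶ x => g ≫ α)) :
    ∃ (z : C) (β : t ⟶ z) (γ : z ⟶ x⟦(1 : ℤ)⟧),
      (Triangle.mk α β γ ∈ distTriang C) ∧ ∀ w ∈ S, ∀ c : w ⟶ z, c = 0 := by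
  obtain ⟨z, β, γ, mem⟩ := distinguished_cocone_triangle α
  refine ⟨z, β, γ, mem, ?_⟩
  intro w hw c
  -- first show `c ≫ γ = 0`
  have hdα : (c ≫ γ) ≫ (shiftFunctor C (1 : ℤ)).map α = 0 := by
    have h31' : γ ≫ (shiftFunctor C (1 : ℤ)).map α = 0 := comp_distTriang_mor_zero₃₁ _ mem
    rw [Category.assoc, h31', comp_zero]
  obtain ⟨y', f, g, mem2⟩ := distinguished_cocone_triangle₂ (c ≫ γ)
  have hy' : y' ∈ S := hS.ext_mem _ mem2 hx hw
  have hfac0 : (Triangle.mk f g (c ≫ γ)).invRotate.mor₁ ≫ α = 0 := by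
    change (-(shiftFunctor C (-1 : ℤ)).map (c ≫ γ) ≫ (shiftEquiv C (1 : ℤ)).unitIso.inv.app x) ≫ α = 0
    erw [Preadditive.neg_comp, Category.assoc, neg_eq_zero]
    have n := (shiftEquiv C (1 : ℤ)).unitIso.inv.naturality α
    dsimp at n
    erw [← n, ← Functor.map_comp_assoc, hdα, Functor.map_zero, zero_comp]
  obtain ⟨m, hm⟩ := Triangle.yoneda_exact₂ _ (inv_rot_of_distTriang _ mem2) α hfac0
  replace hm : α = f ≫ m := hm
  obtain ⟨r, hr⟩ := (hbij y' hy').2 m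
  simp only at hr
  have hfr : f ≫ r = 𝟙 x := by
    apply (hbij x hx).1
    show (f ≫ r) ≫ α = 𝟙 x ≫ α
    rw [Category.assoc, hr, ← hm, Category.id_comp]
  have h31 : (c ≫ γ) ≫ (shiftFunctor C (1 : ℤ)).map f = 0 :=
    comp_distTriang_mor_zero₃₁ _ mem2
  have hd0 : c ≫ γ = 0 := by
    calc c ≫ γ = (c ≫ γ) ≫ 𝟙 (x⟦(1 : ℤ)⟧) := by rw [Category.comp_id]
      _ = (c ≫ γ) ≫ ((shiftFunctor C (1 : ℤ)).map f ≫ (shiftFunctor C (1 : ℤ)).map r) := by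
          rw [← Functor.map_comp, hfr, CategoryTheory.Functor.map_id]
      _ = ((c ≫ γ) ≫ (shiftFunctor C (1 : ℤ)).map f) ≫ (shiftFunctor C (1 : ℤ)).map r := by
          simp only [Category.assoc]
      _ = 0 := by rw [h31, zero_comp]
  obtain ⟨b, hb⟩ : ∃ b : w ⟶ t, c = b ≫ β := Triangle.coyoneda_exact₃ _ mem c hd0
  replace hb : c = b ≫ β := hb
  obtain ⟨g', hg'⟩ := (hbij w hw).2 b
  simp only at hg'
  rw [hb, ← hg', Category.assoc]
  have : α ≫ β = 0 := comp_distTriang_mor_zero₁₂ _ mem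
  rw [this, comp_zero]

/-- From representability of `H_S(-,t)` extract a coreflection `α : x ⟶ t`, `x ∈ S`. -/
lemma exists_coreflection (hS : IsPreaisle S) (t : C)
    (hrep : ∃ (x : C) (φ : ∀ y : C, (y ⟶ x) → HQuot S y t),
        (∀ y : C, Function.Bijective (φ y)) ∧
        (∀ {y' y : C} (e : y' ⟶ y) (g : y ⟶ x) (h : HTilde S y t),
          φ y g = Quot.mk _ h → φ y' (e ≫ g) = Quot.mk _ ⟨h.s, h.mem, e ≫ h.f, h.g⟩)) :
    ∃ (x : C) (α : x ⟶ t), x ∈ S ∧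
      ∀ w ∈ S, Function.Bijective (fun g : w ⟶ x => g ≫ α) := by
  obtain ⟨x, φ, hbij, hnat⟩ := hrep
  obtain ⟨h₀, hh₀⟩ := Quot.exists_rep (φ x (𝟙 x))
  have key : ∀ {y : C} (g : y ⟶ x),
      φ y g = Quot.mk _ ⟨h₀.s, h₀.mem, g ≫ h₀.f, h₀.g⟩ := by
    intro y g
    have := hnat g (𝟙 x) h₀ hh₀.symm
    rwa [Category.comp_id] at this
  -- `x ∈ S`
  obtain ⟨r, hr⟩ := (hbij h₀.s).2 (Quot.mk _ ⟨h₀.s, h₀.mem, 𝟙 h₀.s, h₀.g⟩)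
  obtain ⟨s'', hs'', u, u', v, w1, w2, w3⟩ := hquot_exact hS ((key r).symm.trans hr)
  dsimp at w1 w2 w3
  rw [Category.id_comp] at w1
  have hfr : h₀.f ≫ r = 𝟙 x := by
    apply (hbij x).1
    rw [key (h₀.f ≫ r), ← hh₀]
    apply Quot.sound
    refine ⟨s'', hs'', u, u', v, ?_, w2, w3⟩
    dsimp
    rw [← w1]
    simp only [Category.assoc]
  have hxS : x ∈ S := hS.summand_mem x h₀.s h₀.mem h₀.f r hfr
  refine ⟨x, h₀.f ≫ h₀.g, hxS, ?_⟩
  have key2 : ∀ {y : C} (g : y ⟶ x),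
      φ y g = Quot.mk _ ⟨x, hxS, g, h₀.f ≫ h₀.g⟩ := by
    intro y g
    rw [key g]
    apply Quot.sound
    exact ⟨h₀.s, h₀.mem, 𝟙 h₀.s, h₀.f, h₀.g, by simp, Category.id_comp _, rfl⟩
  intro w hw
  constructor
  · intro g g' hgg'
    dsimp at hgg'
    have e3 : ∀ (k : w ⟶ x), (Quot.mk _ ⟨x, hxS, k, h₀.f ≫ h₀.g⟩ : HQuot S w t) =
        Quot.mk _ ⟨w, hw, 𝟙 w, k ≫ (h₀.f ≫ h₀.g)⟩ := by
      intro k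
      apply Quot.sound
      exact ⟨x, hxS, 𝟙 x, k, h₀.f ≫ h₀.g, by simp, Category.id_comp _, rfl⟩
    apply (hbij w).1
    rw [key2 g, key2 g', e3 g, e3 g', hgg']
  · intro c
    obtain ⟨g, hg⟩ := (hbij w).2 (Quot.mk _ ⟨w, hw, 𝟙 w, c⟩)
    obtain ⟨s'', hs'', u, u', v, c1, c2, c3⟩ := hquot_exact hS ((key2 g).symm.trans hg)
    dsimp at c1 c2 c3
    rw [Category.id_comp] at c1
    refine ⟨g, ?_⟩
    dsimp
    rw [← c2, ← Category.assoc, c1, c3]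

end Statement11Aux

open Statement11Aux in
/-- a pre-aisle `S` equals `T^{≤0}` for some t-structure on `T` if and only
if for every object `t` the functor `H_S(-,t) : Tᵒᵖ ⥤ Ab` is representable, i.e. there are
an object `x` and a natural family of bijections `Hom(y,x) ≃ H_S(y,t)`. -/
theorem statement11 (S : Set C) (hS : IsPreaisle S) :
    (∃ τ : Triangulated.TStructure C, ∀ y : C, τ.le 0 y ↔ y ∈ S) ↔
      (∀ t : C, ∃ (x : C) (φ : ∀ y : C, (y ⟶ x) → HQuot S y t),
        (∀ y : C, Function.Bijective (φ y)) ∧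
        (∀ {y' y : C} (e : y' ⟶ y) (g : y ⟶ x) (h : HTilde S y t),
          φ y g = Quot.mk _ h → φ y' (e ≫ g) = Quot.mk _ ⟨h.s, h.mem, e ≫ h.f, h.g⟩)) := by
  constructor
  · -- from a t-structure to representability
    rintro ⟨τ, hτ⟩ t
    obtain ⟨x, z, hx, hz, α, β, γ, mem⟩ := τ.exists_triangle t 0 1 (by omega)
    have hxS : x ∈ S := (hτ x).1 hx
    have hz' : ∀ w ∈ S, ∀ c : w ⟶ z, c = 0 := by
      intro w hw c
      exact τ.zero' c ((hτ w).2 hw) hz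
    have hbij : ∀ w ∈ S, Function.Bijective (fun g : w ⟶ x => g ≫ α) :=
      fun w hw => bij_of_orthogonal hS mem hz' hw
    refine ⟨x, fun y g => Quot.mk _ ⟨x, hxS, g, α⟩, ?_, ?_⟩
    · intro y
      constructor
      · intro g g' hgg'
        obtain ⟨s'', hs'', u, u', v, c1, c2, c3⟩ := hquot_exact hS hgg'
        dsimp at c1 c2 c3
        obtain ⟨vt, hvt⟩ := (hbij s'' hs'').2 v
        dsimp at hvt
        have hu : u ≫ vt = 𝟙 x := by
          apply (hbij x hxS).1
          dsimp
          rw [Category.assoc, hvt, c2, Category.id_comp]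
        have hu' : u' ≫ vt = 𝟙 x := by
          apply (hbij x hxS).1
          dsimp
          rw [Category.assoc, hvt, c3, Category.id_comp]
        calc g = g ≫ (u ≫ vt) := by rw [hu, Category.comp_id]
          _ = (g ≫ u) ≫ vt := by rw [Category.assoc]
          _ = (g' ≫ u') ≫ vt := by rw [c1]
          _ = g' ≫ (u' ≫ vt) := by rw [Category.assoc]
          _ = g' := by rw [hu', Category.comp_id]
      · intro q
        obtain ⟨h, rfl⟩ := Quot.exists_rep q
        obtain ⟨g', hg'⟩ := (hbij h.s h.mem).2 h.g
        dsimp at hg'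
        refine ⟨h.f ≫ g', ?_⟩
        apply Quot.sound
        exact ⟨x, hxS, 𝟙 x, g', α, by rw [Category.comp_id], Category.id_comp _, hg'⟩
    · intro y' y e g h hq
      obtain ⟨s'', hs'', u, u', v, c1, c2, c3⟩ := hquot_exact hS hq
      apply Quot.sound
      refine ⟨s'', hs'', u, u', v, ?_, c2, c3⟩
      dsimp at c1 ⊢
      rw [Category.assoc, Category.assoc, c1]
  · -- from representability to a t-structure
    intro hrep
    have main : ∀ t : C, ∃ (x : C) (α : x ⟶ t), x ∈ S ∧
        ∀ w ∈ S, Function.Bijective (fun g : w ⟶ x => g ≫ α) :=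
      fun t => exists_coreflection hS t (hrep t)
    refine ⟨⟨fun n X => (X⟦n⟧ : C) ∈ S,
      fun n Y => ∀ w ∈ S, ∀ m : ℤ, m + 1 = n → ∀ f : w ⟶ (Y⟦m⟧ : C), f = 0,
      ?_, ?_, ?_, ?_, ?_, ?_, ?_, ?_⟩, ?_⟩
    · -- LE closed under isomorphisms
      intro n
      exact ⟨fun {X Y} e hX =>
        mem_of_iso hS ((shiftFunctor C n).mapIso e).symm hX⟩
    · -- GE closed under isomorphisms
      intro n
      refine ⟨fun {X Y} e hX => ?_⟩
      intro w hw m hm f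
      have h0 := hX w hw m hm (f ≫ ((shiftFunctor C m).mapIso e).inv)
      calc f = (f ≫ ((shiftFunctor C m).mapIso e).inv) ≫ ((shiftFunctor C m).mapIso e).hom := by
            simp
        _ = 0 := by rw [h0, zero_comp]
    · -- LE_shift
      intro n a n' h X hX
      exact mem_of_iso hS (((shiftFunctorAdd' C a n' n h).symm).app X) hX
    · -- GE_shift
      intro n a n' h Y hY
      intro w hw m hm f
      have e := (shiftFunctorAdd' C a m (m + a) (by omega)).app Y
      have h0 := hY w hw (m + a) (by omega) (f ≫ e.inv)
      calc f = (f ≫ e.inv) ≫ e.hom := by simp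
        _ = 0 := by rw [h0, zero_comp]
    · -- zero'
      intro X Y f hX hY
      have hXS : X ∈ S := mem_of_iso hS ((shiftFunctorZero C ℤ).app X).symm hX
      have h0 := hY X hXS 0 (by omega) (f ≫ ((shiftFunctorZero C ℤ).app Y).inv)
      calc f = (f ≫ ((shiftFunctorZero C ℤ).app Y).inv) ≫ ((shiftFunctorZero C ℤ).app Y).hom := by
            simp
        _ = 0 := by rw [h0, zero_comp]
    · -- LE_zero_le
      intro X hX
      exact mem_of_iso hS ((shiftFunctorAdd' C 0 1 1 (by omega)).app X) (hS.shift_mem _ hX)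
    · -- GE_one_le
      intro Y hY
      intro w hw m hm f
      obtain rfl : m = -1 := by omega
      apply (shiftFunctor C (1 : ℤ)).map_injective
      rw [Functor.map_zero]
      have e := (shiftFunctorAdd' C (-1 : ℤ) 1 0 (by omega)).app Y
      have h0 := hY _ (hS.shift_mem w hw) 0 (by omega)
        ((shiftFunctor C (1 : ℤ)).map f ≫ e.inv)
      calc (shiftFunctor C (1 : ℤ)).map f
          = ((shiftFunctor C (1 : ℤ)).map f ≫ e.inv) ≫ e.hom := by simp
        _ = 0 := by rw [h0, zero_comp]
    · -- exists_triangle_zero_one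
      intro A
      obtain ⟨x, α, hxS, hbij⟩ := main A
      obtain ⟨z, β, γ, mem, hz⟩ := exists_orth_triangle hS α hxS hbij
      refine ⟨x, z, mem_of_iso hS ((shiftFunctorZero C ℤ).app x) hxS, ?_, α, β, γ, mem⟩
      intro w hw m hm f
      obtain rfl : m = 0 := by omega
      have h0 := hz w hw (f ≫ ((shiftFunctorZero C ℤ).app z).hom)
      calc f = (f ≫ ((shiftFunctorZero C ℤ).app z).hom) ≫ ((shiftFunctorZero C ℤ).app z).inv := by
            simp
        _ = 0 := by rw [h0, zero_comp]
    · -- LE 0 y ↔ y ∈ S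
      intro y
      constructor
      · intro hy
        exact mem_of_iso hS ((shiftFunctorZero C ℤ).app y).symm hy
      · intro hy
        exact mem_of_iso hS ((shiftFunctorZero C ℤ).app y) hy
end

section
/- Let T be a triangulated category with coproducts, S ⊆ T a set of objects, α a regular cardinal such that T is α-compactly generated and S ⊆ T^α, and let S(α) be the subcategory of Construction 2.1. Then: S ⊆ S(α) ⊆ T^α ∩ ⟨S⟩^{≤0}; Σ S(α) ⊆ S(α); S(α) * S(α) = S(α); and any coproduct of fewer than α objects of S(α) lies in S(α). -/
open CategoryTheory CategoryTheory.Limits CategoryTheory.Pretriangulated ZeroObject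

universe v u

variable {C : Type u} [Category.{v} C] [Preadditive C] [HasZeroObject C]
  [HasShift C ℤ] [∀ n : ℤ, (CategoryTheory.shiftFunctor C n).Additive] [Pretriangulated C]
  [IsTriangulated C] [HasCoproducts.{v} C]

/-- A cocomplete pre-aisle: a pre-aisle that is moreover closed under all coproducts. -/
def IsCocompletePreaisle (S : Set C) : Prop :=
  IsPreaisle S ∧ ∀ {ι : Type v} (xs : ι → C), (∀ i, xs i ∈ S) → (∐ xs : C) ∈ S

/-- `⟨S⟩^{≤0}`: the smallest cocomplete pre-aisle containing `S`. -/
def aisleGen (S : Set C) : Set C :=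
  ⋂₀ {P : Set C | IsCocompletePreaisle P ∧ S ⊆ P}

/-- `A * B`: the class of objects `y` fitting in a distinguished triangle `a ⟶ y ⟶ b ⟶ Σa`
with `a ∈ A` and `b ∈ B`. -/
def starSet (A B : Set C) : Set C :=
  {y | ∃ (a : C) (_ : a ∈ A) (b : C) (_ : b ∈ B) (f : a ⟶ y) (g : y ⟶ b)
    (h : b ⟶ (a⟦(1 : ℤ)⟧ : C)), Triangle.mk f g h ∈ (distTriang C)}

/-- The class of coproducts of fewer than `α` objects of `A`. -/
def smallCoprodSet (α : Cardinal.{v}) (A : Set C) : Set C :=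
  {y | ∃ (ι : Type v) (_ : Cardinal.mk ι < α) (xs : ι → C) (_ : ∀ i, xs i ∈ A),
    Nonempty ((∐ xs : C) ≅ y)}

/-- The class `∪_{j ≥ 0} Σʲ S` of all nonnegative suspensions of objects of `S`. -/
def suspSet (S : Set C) : Set C :=
  {y | ∃ (j : ℕ) (x : C), x ∈ S ∧ y = (x⟦(j : ℤ)⟧ : C)}

/-- Construction 2.1, by transfinite induction (with the indexing shifted by one:
`SClass α S 0` is the paper's `S(1)`): the base stage consists of the coproducts of fewer
than `α` objects of `∪_j Σʲ S`; the stage at a successor consists of the coproducts of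
fewer than `α` objects of `S(i) * S(i)`; and the stage at a limit ordinal is the union of
the earlier stages. -/
noncomputable def SClass (α : Cardinal.{v}) (S : Set C) (i : Ordinal.{v}) : Set C :=
  Ordinal.limitRecOn i (smallCoprodSet α (suspSet S))
    (fun _ prev => smallCoprodSet α (starSet prev prev))
    (fun o _ ih => {y | ∃ (o' : Ordinal.{v}) (h : o' < o), y ∈ ih o' h})

/-- The paper's `S(α)`: the stage of Construction 2.1 at the ordinal `α`. -/
noncomputable def SAlpha (α : Cardinal.{v}) (S : Set C) : Set C :=
  SClass α S (Cardinal.ord α)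

/-- Data exhibiting the triangulated category `C` as `α`-compactly generated, `compacts`
playing the role of the subcategory `T^α` of `α`-compact objects: an essentially small
triangulated subcategory, closed under coproducts of fewer than `α` objects, generating,
and such that any morphism from one of its objects to a coproduct factors through a
sub-coproduct of fewer than `α` of the summands via `α`-compact intermediaries. -/
structure AlphaCompactGeneration (α : Cardinal.{v}) where
  compacts : Set C
  zero_mem : (0 : C) ∈ compacts
  iso_mem : ∀ x y : C, x ∈ compacts → (x ≅ y) → y ∈ compacts
  shift_mem : ∀ x ∈ compacts, ∀ n : ℤ, (x⟦n⟧ : C) ∈ compacts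
  cone_mem : ∀ T : Triangle C, T ∈ (distTriang C) → T.obj₁ ∈ compacts →
    T.obj₂ ∈ compacts → T.obj₃ ∈ compacts
  smallCoprod_mem : ∀ {ι : Type v}, Cardinal.mk ι < α → ∀ xs : ι → C,
    (∀ i, xs i ∈ compacts) → (∐ xs : C) ∈ compacts
  essentiallySmall : ∃ (ι : Type v) (f : ι → C), ∀ x ∈ compacts, ∃ i, Nonempty (x ≅ f i)
  factor : ∀ t ∈ compacts, ∀ {ι : Type v} (xs : ι → C) (f : t ⟶ ∐ xs),
    ∃ (J : Set ι) (_ : Cardinal.mk J < α) (ts : ι → C) (_ : ∀ i, ts i ∈ compacts)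
      (_ : ∀ i ∉ J, IsZero (ts i)) (g : t ⟶ ∐ ts) (fs : ∀ i, ts i ⟶ xs i),
      f = g ≫ Limits.Sigma.map fs
  generating : ∀ x : C, (∀ t ∈ compacts, ∀ f : t ⟶ x, f = 0) → IsZero x

section Auxiliary

variable {C : Type u} [Category.{v} C] [Preadditive C] [HasZeroObject C]
  [HasShift C ℤ] [∀ n : ℤ, (CategoryTheory.shiftFunctor C n).Additive] [Pretriangulated C]
  [IsTriangulated C] [HasCoproducts.{v} C]

variable (α : Cardinal.{v}) (S : Set C)

lemma SClass_zero : SClass α S 0 = smallCoprodSet α (suspSet S) :=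
  Ordinal.limitRecOn_zero _ _ _

lemma SClass_succ (o : Ordinal.{v}) :
    SClass α S (Order.succ o) = smallCoprodSet α (starSet (SClass α S o) (SClass α S o)) :=
  Ordinal.limitRecOn_succ _ _ _ _

lemma SClass_limit (o : Ordinal.{v}) (ho : Order.IsSuccLimit o) :
    SClass α S o = {y | ∃ (o' : Ordinal.{v}) (_ : o' < o), y ∈ SClass α S o'} :=
  Ordinal.limitRecOn_limit _ _ _ _ ho

lemma zero_mem_smallCoprodSet (hα : 0 < α) (A : Set C) : (0 : C) ∈ smallCoprodSet α A := by
  refine ⟨PEmpty, by simpa using hα, fun x => x.elim, fun i => i.elim, ⟨?_⟩⟩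
  have hz : IsZero (∐ (fun x : PEmpty.{v+1} => x.elim) : C) := by
    rw [IsZero.iff_id_eq_zero]
    apply Sigma.hom_ext
    intro i
    exact i.elim
  exact hz.isoZero

lemma mem_smallCoprodSet_of_iso (hα : Cardinal.aleph0 ≤ α) {A : Set C} {x y : C}
    (hx : x ∈ A) (e : x ≅ y) : y ∈ smallCoprodSet α A := by
  refine ⟨PUnit, ?_, fun _ => x, fun _ => hx, ⟨coproductUniqueIso _ ≪≫ e⟩⟩
  simpa using lt_of_lt_of_le Cardinal.one_lt_aleph0 hα

lemma mem_starSet_self {A B : Set C} {y : C} (hy : y ∈ A) (h0 : (0 : C) ∈ B) :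
    y ∈ starSet A B :=
  ⟨y, hy, 0, h0, 𝟙 y, 0, 0, contractible_distinguished y⟩

lemma zero_mem_SClass (hα : α.IsRegular) (o : Ordinal.{v}) : (0 : C) ∈ SClass α S o := by
  induction o using Ordinal.limitRecOn with
  | zero => rw [SClass_zero]; exact zero_mem_smallCoprodSet α hα.pos _
  | add_one o _ => rw [Ordinal.add_one_eq_succ, SClass_succ]; exact zero_mem_smallCoprodSet α hα.pos _
  | limit o ho ih =>
      rw [SClass_limit α S o ho]
      exact ⟨0, ho.pos, ih 0 ho.pos⟩

lemma SClass_subset_succ (hα : α.IsRegular) (o : Ordinal.{v}) :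
    SClass α S o ⊆ SClass α S (Order.succ o) := by
  intro y hy
  rw [SClass_succ]
  exact mem_smallCoprodSet_of_iso α hα.aleph0_le
    (mem_starSet_self hy (zero_mem_SClass α S hα o)) (Iso.refl y)

lemma SClass_mono (hα : α.IsRegular) {i j : Ordinal.{v}} (hij : i ≤ j) :
    SClass α S i ⊆ SClass α S j := by
  induction j using Ordinal.limitRecOn with
  | zero => obtain rfl := nonpos_iff_eq_zero.mp hij; exact subset_rfl
  | add_one o ih =>
      rw [Ordinal.add_one_eq_succ] at hij ⊢
      rcases lt_or_eq_of_le hij with h | rfl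
      · exact (ih (Order.lt_succ_iff.mp h)).trans (SClass_subset_succ α S hα o)
      · exact subset_rfl
  | limit o ho _ =>
      rcases lt_or_eq_of_le hij with h | rfl
      · intro y hy
        rw [SClass_limit α S o ho]
        exact ⟨i, h, hy⟩
      · exact subset_rfl

lemma shift_mem_starSet {A B : Set C} (hA : ∀ a ∈ A, (a⟦(1 : ℤ)⟧ : C) ∈ A)
    (hB : ∀ b ∈ B, (b⟦(1 : ℤ)⟧ : C) ∈ B) {y : C} (hy : y ∈ starSet A B) :
    (y⟦(1 : ℤ)⟧ : C) ∈ starSet A B := by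
  obtain ⟨a, ha, b, hb, f, g, h, hT⟩ := hy
  exact ⟨a⟦(1 : ℤ)⟧, hA a ha, b⟦(1 : ℤ)⟧, hB b hb, _, _, _,
    rot_of_distTriang _ (rot_of_distTriang _ (rot_of_distTriang _ hT))⟩

lemma shift_mem_SClass (hα : α.IsRegular) (o : Ordinal.{v}) :
    ∀ y ∈ SClass α S o, (y⟦(1 : ℤ)⟧ : C) ∈ SClass α S o := by
  induction o using Ordinal.limitRecOn with
  | zero =>
      rw [SClass_zero]
      rintro y ⟨ι, hι, xs, hxs, ⟨e⟩⟩
      choose j x hxS heq using hxs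
      refine ⟨ι, hι, fun i => ((x i)⟦((j i + 1 : ℕ) : ℤ)⟧ : C),
        fun i => ⟨j i + 1, x i, hxS i, rfl⟩, ⟨?_⟩⟩
      refine Sigma.mapIso (fun i => ?_) ≪≫
        (PreservesCoproduct.iso (shiftFunctor C (1 : ℤ)) xs).symm ≪≫
        (shiftFunctor C (1 : ℤ)).mapIso e
      exact (shiftFunctorAdd' C (j i : ℤ) 1 ((j i + 1 : ℕ) : ℤ) (by push_cast; ring)).app (x i) ≪≫
        eqToIso (by rw [heq i]; rfl)
  | add_one o ih =>
      rw [Ordinal.add_one_eq_succ, SClass_succ]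
      rintro y ⟨ι, hι, xs, hxs, ⟨e⟩⟩
      refine ⟨ι, hι, fun i => ((xs i)⟦(1 : ℤ)⟧ : C),
        fun i => shift_mem_starSet ih ih (hxs i), ⟨?_⟩⟩
      exact (PreservesCoproduct.iso (shiftFunctor C (1 : ℤ)) xs).symm ≪≫
        (shiftFunctor C (1 : ℤ)).mapIso e
  | limit o ho ih =>
      rw [SClass_limit α S o ho]
      rintro y ⟨o', ho', hy⟩
      exact ⟨o', ho', ih o' ho' y hy⟩

lemma SClass_subset_compacts (hα : α.IsRegular) (G : AlphaCompactGeneration (C := C) α)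
    (hS : S ⊆ G.compacts) (o : Ordinal.{v}) : SClass α S o ⊆ G.compacts := by
  induction o using Ordinal.limitRecOn with
  | zero =>
      rw [SClass_zero]
      rintro y ⟨ι, hι, xs, hxs, ⟨e⟩⟩
      refine G.iso_mem _ _ (G.smallCoprod_mem hι xs fun i => ?_) e
      obtain ⟨j, x, hx, heq⟩ := hxs i
      rw [heq]
      exact G.shift_mem x (hS hx) _
  | add_one o ih =>
      rw [Ordinal.add_one_eq_succ, SClass_succ]
      rintro y ⟨ι, hι, xs, hxs, ⟨e⟩⟩
      refine G.iso_mem _ _ (G.smallCoprod_mem hι xs fun i => ?_) e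
      obtain ⟨a, ha, b, hb, f, g, h, hT⟩ := hxs i
      exact G.cone_mem _ (inv_rot_of_distTriang _ hT)
        (G.shift_mem b (ih hb) (-1)) (ih ha)
  | limit o ho ih =>
      rw [SClass_limit α S o ho]
      rintro y ⟨o', ho', hy⟩
      exact ih o' ho' hy

lemma preaisle_iso {P : Set C} (hP : IsPreaisle P) {x y : C} (hx : x ∈ P) (e : x ≅ y) :
    y ∈ P :=
  hP.summand_mem y x hx e.inv e.hom (by simp)

lemma SClass_subset_preaisle {P : Set C} (hP : IsCocompletePreaisle P) (hSP : S ⊆ P)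
    (o : Ordinal.{v}) : SClass α S o ⊆ P := by
  induction o using Ordinal.limitRecOn with
  | zero =>
      rw [SClass_zero]
      rintro y ⟨ι, hι, xs, hxs, ⟨e⟩⟩
      refine preaisle_iso hP.1 (hP.2 xs fun i => ?_) e
      obtain ⟨j, x, hx, heq⟩ := hxs i
      rw [heq]; clear heq
      induction j with
      | zero =>
          exact preaisle_iso hP.1 (hSP hx) ((shiftFunctorZero' C ((0 : ℕ) : ℤ) (by simp)).app x).symm
      | succ j ih =>
          exact preaisle_iso hP.1 (hP.1.shift_mem _ ih)
            ((shiftFunctorAdd' C (j : ℤ) 1 ((j + 1 : ℕ) : ℤ) (by push_cast; ring)).app x).symm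
  | add_one o ih =>
      rw [Ordinal.add_one_eq_succ, SClass_succ]
      rintro y ⟨ι, hι, xs, hxs, ⟨e⟩⟩
      refine preaisle_iso hP.1 (hP.2 xs fun i => ?_) e
      obtain ⟨a, ha, b, hb, f, g, h, hT⟩ := hxs i
      exact hP.1.ext_mem _ hT (ih ha) (ih hb)
  | limit o ho ih =>
      rw [SClass_limit α S o ho]
      rintro y ⟨o', ho', hy⟩
      exact ih o' ho' hy

end Auxiliary

/-- the properties of `S(α)` from Construction 2.1:
`S ⊆ S(α) ⊆ T^α ∩ ⟨S⟩^{≤0}`; `Σ S(α) ⊆ S(α)`; `S(α) * S(α) = S(α)`; and any coproduct of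
fewer than `α` objects of `S(α)` lies in `S(α)`. -/
theorem statement12 (α : Cardinal.{v}) (hα : α.IsRegular)
    (G : AlphaCompactGeneration (C := C) α) (S : Set C) (hS : S ⊆ G.compacts) :
    S ⊆ SAlpha α S ∧
    SAlpha α S ⊆ G.compacts ∩ aisleGen S ∧
    (∀ x ∈ SAlpha α S, (x⟦(1 : ℤ)⟧ : C) ∈ SAlpha α S) ∧
    starSet (SAlpha α S) (SAlpha α S) = SAlpha α S ∧
    (∀ {ι : Type v}, Cardinal.mk ι < α → ∀ xs : ι → C, (∀ i, xs i ∈ SAlpha α S) →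
      (∐ xs : C) ∈ SAlpha α S) := by
  have hlim : Order.IsSuccLimit (Cardinal.ord α) := Cardinal.isSuccLimit_ord hα.aleph0_le
  have hsub : ∀ {o : Ordinal.{v}}, o < Cardinal.ord α → SClass α S o ⊆ SAlpha α S :=
    fun {o} ho => SClass_mono α S hα ho.le
  have hmem : ∀ {y : C}, y ∈ SAlpha α S →
      ∃ (o : Ordinal.{v}), o < Cardinal.ord α ∧ y ∈ SClass α S o := by
    intro y hy
    rw [SAlpha, SClass_limit α S _ hlim] at hy
    obtain ⟨o, ho, h⟩ := hy
    exact ⟨o, ho, h⟩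
  refine ⟨?_, ?_, ?_, ?_, ?_⟩
  · intro x hx
    refine hsub hlim.pos ?_
    rw [SClass_zero]
    exact mem_smallCoprodSet_of_iso α hα.aleph0_le (⟨0, x, hx, rfl⟩ : _ ∈ suspSet S)
      ((shiftFunctorZero' C ((0 : ℕ) : ℤ) (by simp)).app x)
  · intro y hy
    exact ⟨SClass_subset_compacts α S hα G hS _ hy,
      Set.mem_sInter.2 fun P hP => SClass_subset_preaisle α S hP.1 hP.2 _ hy⟩
  · exact shift_mem_SClass α S hα _
  · apply Set.Subset.antisymm
    · rintro y ⟨a, ha, b, hb, f, g, h, hT⟩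
      obtain ⟨o₁, ho₁, ha'⟩ := hmem ha
      obtain ⟨o₂, ho₂, hb'⟩ := hmem hb
      refine hsub (hlim.succ_lt (max_lt ho₁ ho₂)) ?_
      rw [SClass_succ]
      refine mem_smallCoprodSet_of_iso α hα.aleph0_le
        (⟨a, SClass_mono α S hα (le_max_left o₁ o₂) ha',
          b, SClass_mono α S hα (le_max_right o₁ o₂) hb', f, g, h, hT⟩ :
          y ∈ starSet _ _) (Iso.refl y)
    · intro y hy
      exact mem_starSet_self hy (zero_mem_SClass α S hα _)
  · intro ι hι xs hxs
    choose o ho hmem' using fun i => hmem (hxs i)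
    have hO : (⨆ i, o i) < Cardinal.ord α :=
      Cardinal.iSup_lt_ord_of_isRegular hα hι ho
    refine hsub (hlim.succ_lt hO) ?_
    rw [SClass_succ]
    exact ⟨ι, hι, xs, fun i => mem_starSet_self
      (SClass_mono α S hα (Ordinal.le_iSup o i) (hmem' i))
      (zero_mem_SClass α S hα _), ⟨Iso.refl _⟩⟩
end

section
/- Let T be a well generated triangulated category and S ⊆ T a set of objects, and put 𝒮 = ⟨S⟩^{≤0}. Then for every pair of objects x, t of T, the class H_𝒮(x,t) is a (small) set: choosing a regular cardinal α with T α-compactly generated and S ∪ {x} ⊆ T^α, every class in H_𝒮(x,t) is represented by a pair x → s' → t with s' ∈ S(α), and two such representatives x →f s →g t and x →f' s' →g' t with s, s' ∈ S(α) are equivalent if and only if they can be connected by a commutative diagram through an object s'' ∈ S(α). -/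
open CategoryTheory CategoryTheory.Limits CategoryTheory.Pretriangulated ZeroObject

universe v u

variable {C : Type u} [Category.{v} C] [Preadditive C] [HasZeroObject C]
  [HasShift C ℤ] [∀ n : ℤ, (CategoryTheory.shiftFunctor C n).Additive] [Pretriangulated C]
  [IsTriangulated C] [HasCoproducts.{v} C]

/-! ### Auxiliary material for the proof of Statement 15 -/

namespace Statement15Aux

open Triangulated

attribute [local instance] hasFiniteCoproducts_of_hasCoproducts

lemma isPreaisle_iso {P : Set C} (hP : IsPreaisle P) {x y : C} (e : x ≅ y) (hx : x ∈ P) :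
    y ∈ P :=
  hP.summand_mem y x hx e.inv e.hom e.inv_hom_id

lemma aisleGen_sub (S : Set C) {P : Set C} (h1 : IsCocompletePreaisle P) (h2 : S ⊆ P) :
    aisleGen S ⊆ P := fun _y hy => hy P ⟨h1, h2⟩

lemma subset_aisleGen (S : Set C) : S ⊆ aisleGen S :=
  fun _y hy => Set.mem_sInter.2 fun _P hP => hP.2 hy

lemma isCocompletePreaisle_aisleGen (S : Set C) : IsCocompletePreaisle (aisleGen S) := by
  constructor
  · constructor
    · exact fun P hP => hP.1.1.zero_mem
    · exact fun s hs P hP => hP.1.1.shift_mem s (hs P hP)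
    · exact fun T hT h1 h3 P hP => hP.1.1.ext_mem T hT (h1 P hP) (h3 P hP)
    · exact fun x s hs i r hir P hP => hP.1.1.summand_mem x s (hs P hP) i r hir
  · exact fun xs hxs P hP => hP.1.2 xs (fun i => hxs i P hP)

lemma aisleGen_iso {S : Set C} {a b : C} (e : a ≅ b) (ha : a ∈ aisleGen S) : b ∈ aisleGen S :=
  isPreaisle_iso (isCocompletePreaisle_aisleGen S).1 e ha

lemma zero_mem_aisleGen (S : Set C) : (0 : C) ∈ aisleGen S :=
  (isCocompletePreaisle_aisleGen S).1.zero_mem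

lemma smallCoprodSet_iso {α : Cardinal.{v}} {A : Set C} {a b : C} (e : a ≅ b)
    (ha : a ∈ smallCoprodSet α A) : b ∈ smallCoprodSet α A := by
  obtain ⟨ι, hι, xs, hxs, ⟨e'⟩⟩ := ha
  exact ⟨ι, hι, xs, hxs, ⟨e' ≪≫ e⟩⟩

lemma smallCoprodSet_mono {α : Cardinal.{v}} {A B : Set C} (h : A ⊆ B) :
    smallCoprodSet α A ⊆ smallCoprodSet α B := by
  rintro y ⟨ι, hι, xs, hxs, he⟩
  exact ⟨ι, hι, xs, fun i => h (hxs i), he⟩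

lemma mem_smallCoprodSet_self {α : Cardinal.{v}} (hα : α.IsRegular) {A : Set C} {a : C}
    (ha : a ∈ A) : a ∈ smallCoprodSet α A := by
  refine ⟨PUnit, ?_, fun _ => a, fun _ => ha, ⟨coproductUniqueIso _⟩⟩
  rw [Cardinal.mk_punit]
  exact Cardinal.one_lt_aleph0.trans_le hα.aleph0_le

lemma isZero_coprod_pempty (xs : PEmpty.{v+1} → C) : IsZero (∐ xs : C) := by
  rw [IsZero.iff_id_eq_zero]
  apply colimit.hom_ext
  rintro ⟨⟨⟩⟩

lemma zero_mem_smallCoprodSet {α : Cardinal.{v}} (hα : α.IsRegular) (A : Set C) :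
    (0 : C) ∈ smallCoprodSet α A := by
  refine ⟨PEmpty, ?_, fun i => i.elim, fun i => i.elim, ⟨(isZero_coprod_pempty _).isoZero⟩⟩
  rw [Cardinal.mk_pempty]
  exact hα.pos

lemma mem_starSet {A B : Set C} {T : Triangle C} (hT : T ∈ distTriang C) (h1 : T.obj₁ ∈ A)
    (h3 : T.obj₃ ∈ B) : T.obj₂ ∈ starSet A B :=
  ⟨T.obj₁, h1, T.obj₃, h3, T.mor₁, T.mor₂, T.mor₃, hT⟩

lemma self_mem_starSet {A B : Set C} (h0 : (0 : C) ∈ B) {a : C} (ha : a ∈ A) :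
    a ∈ starSet A B :=
  mem_starSet (contractible_distinguished a) ha h0

lemma SClass_zero (α : Cardinal.{v}) (S : Set C) :
    SClass α S 0 = smallCoprodSet α (suspSet S) :=
  Ordinal.limitRecOn_zero _ _ _

lemma SClass_succ (α : Cardinal.{v}) (S : Set C) (o : Ordinal.{v}) :
    SClass α S (Order.succ o) =
      smallCoprodSet α (starSet (SClass α S o) (SClass α S o)) :=
  Ordinal.limitRecOn_succ _ _ _ _

lemma SClass_limit (α : Cardinal.{v}) (S : Set C) {o : Ordinal.{v}} (h : Order.IsSuccLimit o) :
    SClass α S o = {y | ∃ (o' : Ordinal.{v}) (_ : o' < o), y ∈ SClass α S o'} := by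
  rw [SClass, Ordinal.limitRecOn_limit _ _ _ _ h]
  rfl

end Statement15Aux

namespace Statement15Aux
set_option linter.unusedSectionVars false

lemma SClass_iso (α : Cardinal.{v}) (S : Set C) (o : Ordinal.{v}) {a b : C} (e : a ≅ b)
    (ha : a ∈ SClass α S o) : b ∈ SClass α S o := by
  revert ha
  induction o using Ordinal.limitRecOn with
  | zero => rw [SClass_zero]; exact fun ha => smallCoprodSet_iso e ha
  | add_one o _ => rw [Ordinal.add_one_eq_succ, SClass_succ]; exact fun ha => smallCoprodSet_iso e ha
  | limit o ho ih =>
      rw [SClass_limit α S ho]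
      rintro ⟨o', ho', ha⟩
      exact ⟨o', ho', ih o' ho' ha⟩

lemma zero_mem_SClass (α : Cardinal.{v}) (hα : α.IsRegular) (S : Set C) (o : Ordinal.{v}) :
    (0 : C) ∈ SClass α S o := by
  induction o using Ordinal.limitRecOn with
  | zero => rw [SClass_zero]; exact zero_mem_smallCoprodSet hα _
  | add_one o _ => rw [Ordinal.add_one_eq_succ, SClass_succ]; exact zero_mem_smallCoprodSet hα _
  | limit o ho ih =>
      rw [SClass_limit α S ho]
      exact ⟨0, ho.pos, ih 0 ho.pos⟩

lemma SClass_le_succ (α : Cardinal.{v}) (hα : α.IsRegular) (S : Set C) (o : Ordinal.{v}) :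
    SClass α S o ⊆ SClass α S (Order.succ o) := by
  intro y hy
  rw [SClass_succ]
  exact mem_smallCoprodSet_self hα (self_mem_starSet (zero_mem_SClass α hα S o) hy)

lemma SClass_mono (α : Cardinal.{v}) (hα : α.IsRegular) (S : Set C) {o o' : Ordinal.{v}}
    (h : o ≤ o') : SClass α S o ⊆ SClass α S o' := by
  induction o' using Ordinal.limitRecOn with
  | zero => obtain rfl := nonpos_iff_eq_zero.1 h; exact subset_rfl
  | add_one a ih =>
      rw [Ordinal.add_one_eq_succ] at h ⊢
      rcases eq_or_lt_of_le h with rfl | hlt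
      · exact subset_rfl
      · exact (ih (Order.lt_succ_iff.1 hlt)).trans (SClass_le_succ α hα S a)
  | limit a ha _ =>
      rcases eq_or_lt_of_le h with rfl | hlt
      · exact subset_rfl
      · intro y hy
        rw [SClass_limit α S ha]
        exact ⟨o, hlt, hy⟩

lemma cpt_obj₂ {α : Cardinal.{v}} (G : AlphaCompactGeneration (C := C) α) {T : Triangle C}
    (hT : T ∈ distTriang C) (h1 : T.obj₁ ∈ G.compacts) (h3 : T.obj₃ ∈ G.compacts) :
    T.obj₂ ∈ G.compacts :=
  G.cone_mem T.invRotate (inv_rot_of_distTriang T hT) (G.shift_mem _ h3 (-1)) h1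

lemma SClass_subset_cpt (α : Cardinal.{v}) (S : Set C)
    (G : AlphaCompactGeneration (C := C) α) (hS : S ⊆ G.compacts) (o : Ordinal.{v}) :
    SClass α S o ⊆ G.compacts := by
  induction o using Ordinal.limitRecOn with
  | zero =>
      rw [SClass_zero]
      rintro y ⟨ι, hι, xs, hxs, ⟨e⟩⟩
      refine G.iso_mem _ _ (G.smallCoprod_mem hι xs fun i => ?_) e
      obtain ⟨j, z, hz, hxe⟩ := hxs i
      rw [hxe]
      exact G.shift_mem z (hS hz) _
  | add_one o ih =>
      rw [Ordinal.add_one_eq_succ, SClass_succ]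
      rintro y ⟨ι, hι, xs, hxs, ⟨e⟩⟩
      refine G.iso_mem _ _ (G.smallCoprod_mem hι xs fun i => ?_) e
      obtain ⟨a, ha, b, hb, f, g, h, hT⟩ := hxs i
      exact cpt_obj₂ G hT (ih ha) (ih hb)
  | limit o ho ih =>
      rw [SClass_limit α S ho]
      rintro y ⟨o', ho', hy⟩
      exact ih o' ho' hy

lemma shift_nat_mem {Q : Set C} (hQ : IsPreaisle Q) {x : C} (hx : x ∈ Q) (j : ℕ) :
    (x⟦(j : ℤ)⟧ : C) ∈ Q := by
  induction j with
  | zero =>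
      have e : (x⟦((0 : ℕ) : ℤ)⟧ : C) ≅ x := by
        rw [Nat.cast_zero]
        exact (shiftFunctorZero C ℤ).app x
      exact isPreaisle_iso hQ e.symm hx
  | succ j ih =>
      have e : (x⟦((j + 1 : ℕ) : ℤ)⟧ : C) ≅ ((x⟦(j : ℤ)⟧)⟦(1 : ℤ)⟧ : C) :=
        (shiftFunctorAdd' C (j : ℤ) 1 ((j + 1 : ℕ) : ℤ) (by push_cast; ring)).app x
      exact isPreaisle_iso hQ e.symm (hQ.shift_mem _ ih)

lemma SClass_subset_preaisle (α : Cardinal.{v}) (S : Set C) {Q : Set C}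
    (hQ : IsCocompletePreaisle Q) (hSQ : S ⊆ Q) (o : Ordinal.{v}) : SClass α S o ⊆ Q := by
  induction o using Ordinal.limitRecOn with
  | zero =>
      rw [SClass_zero]
      rintro y ⟨ι, hι, xs, hxs, ⟨e⟩⟩
      refine isPreaisle_iso hQ.1 e (hQ.2 xs fun i => ?_)
      obtain ⟨j, z, hz, hxe⟩ := hxs i
      rw [hxe]
      exact shift_nat_mem hQ.1 (hSQ hz) j
  | add_one o ih =>
      rw [Ordinal.add_one_eq_succ, SClass_succ]
      rintro y ⟨ι, hι, xs, hxs, ⟨e⟩⟩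
      refine isPreaisle_iso hQ.1 e (hQ.2 xs fun i => ?_)
      obtain ⟨a, ha, b, hb, f, g, h, hT⟩ := hxs i
      exact hQ.1.ext_mem _ hT (ih ha) (ih hb)
  | limit o ho ih =>
      rw [SClass_limit α S ho]
      rintro y ⟨o', ho', hy⟩
      exact ih o' ho' hy

noncomputable def coprodPtIso {ι : Type v} {xs ys : ι → C} (e : ∀ i, xs i ≅ ys i) :
    (∐ xs : C) ≅ (∐ ys : C) :=
  HasColimit.isoOfNatIso (Discrete.natIso (fun i => e i.as))

noncomputable def coprodShiftIso {ι : Type v} (xs : ι → C) :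
    ((∐ xs)⟦(1 : ℤ)⟧ : C) ≅ (∐ (fun i => ((xs i)⟦(1 : ℤ)⟧ : C)) : C) :=
  (asIso (sigmaComparison (shiftFunctor C (1 : ℤ)) xs)).symm

lemma starSet_shift {A B : Set C} (hA : ∀ a ∈ A, (a⟦(1 : ℤ)⟧ : C) ∈ A)
    (hB : ∀ b ∈ B, (b⟦(1 : ℤ)⟧ : C) ∈ B) {z : C} (hz : z ∈ starSet A B) :
    (z⟦(1 : ℤ)⟧ : C) ∈ starSet A B := by
  obtain ⟨a, ha, b, hb, f, g, h, hT⟩ := hz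
  exact mem_starSet (Triangle.shift_distinguished (Triangle.mk f g h) hT 1) (hA a ha) (hB b hb)

lemma SClass_shift (α : Cardinal.{v}) (S : Set C) (o : Ordinal.{v}) {y : C}
    (hy : y ∈ SClass α S o) : (y⟦(1 : ℤ)⟧ : C) ∈ SClass α S o := by
  revert y
  induction o using Ordinal.limitRecOn with
  | zero =>
      intro y hy
      rw [SClass_zero] at hy ⊢
      obtain ⟨ι, hι, xs, hxs, ⟨e⟩⟩ := hy
      choose j z hz hze using hxs
      refine ⟨ι, hι, fun i => ((z i)⟦((j i + 1 : ℕ) : ℤ)⟧ : C),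
        fun i => ⟨j i + 1, z i, hz i, rfl⟩, ⟨?_⟩⟩
      refine coprodPtIso (fun i =>
        ((shiftFunctorAdd' C ((j i : ℤ)) 1 ((j i + 1 : ℕ) : ℤ) (by push_cast; ring)).app (z i)) ≪≫
          eqToIso (by rw [hze i]; rfl)) ≪≫ (coprodShiftIso xs).symm ≪≫ (shiftFunctor C (1 : ℤ)).mapIso e
  | add_one o ih =>
      intro y hy
      rw [Ordinal.add_one_eq_succ, SClass_succ] at hy ⊢
      obtain ⟨ι, hι, xs, hxs, ⟨e⟩⟩ := hy
      refine ⟨ι, hι, fun i => ((xs i)⟦(1 : ℤ)⟧ : C),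
        fun i => starSet_shift (fun a ha => ih ha) (fun b hb => ih hb) (hxs i),
        ⟨(coprodShiftIso xs).symm ≪≫ (shiftFunctor C (1 : ℤ)).mapIso e⟩⟩
  | limit o ho ih =>
      intro y hy
      rw [SClass_limit α S ho] at hy ⊢
      obtain ⟨o', ho', hy⟩ := hy
      exact ⟨o', ho', ih o' ho' hy⟩

end Statement15Aux

namespace Statement15Aux
set_option linter.unusedSectionVars false

section SAlphaLemmas

variable (α : Cardinal.{v}) (hα : α.IsRegular) (S : Set C)
include hα

lemma zero_mem_SAlpha : (0 : C) ∈ SAlpha α S := zero_mem_SClass α hα S _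

lemma SAlpha_iso {a b : C} (e : a ≅ b) (ha : a ∈ SAlpha α S) : b ∈ SAlpha α S :=
  SClass_iso α S _ e ha

lemma SAlpha_shift {y : C} (hy : y ∈ SAlpha α S) : (y⟦(1 : ℤ)⟧ : C) ∈ SAlpha α S :=
  SClass_shift α S _ hy

lemma SAlpha_star {T : Triangle C} (hT : T ∈ distTriang C) (h1 : T.obj₁ ∈ SAlpha α S)
    (h3 : T.obj₃ ∈ SAlpha α S) : T.obj₂ ∈ SAlpha α S := by
  have hlim : Order.IsSuccLimit (Cardinal.ord α) := Cardinal.isSuccLimit_ord hα.aleph0_le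
  rw [SAlpha, SClass_limit α S hlim] at h1 h3 ⊢
  obtain ⟨o1, ho1, h1⟩ := h1
  obtain ⟨o2, ho2, h3⟩ := h3
  refine ⟨Order.succ (max o1 o2), hlim.succ_lt (max_lt ho1 ho2), ?_⟩
  rw [SClass_succ]
  exact mem_smallCoprodSet_self hα
    (mem_starSet hT (SClass_mono α hα S (le_max_left o1 o2) h1)
      (SClass_mono α hα S (le_max_right o1 o2) h3))

lemma SAlpha_coprod {ι : Type v} (hι : Cardinal.mk ι < α) (xs : ι → C)
    (hxs : ∀ i, xs i ∈ SAlpha α S) : (∐ xs : C) ∈ SAlpha α S := by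
  have hlim : Order.IsSuccLimit (Cardinal.ord α) := Cardinal.isSuccLimit_ord hα.aleph0_le
  have hex : ∀ i, ∃ (o : Ordinal.{v}), o < Cardinal.ord α ∧ xs i ∈ SClass α S o := by
    intro i
    have := hxs i
    rw [SAlpha, SClass_limit α S hlim] at this
    obtain ⟨o, ho, h⟩ := this
    exact ⟨o, ho, h⟩
  choose os hos hmem using hex
  have hsup : iSup os < Cardinal.ord α := Ordinal.iSup_lt_ord (by rwa [hα.cof_eq]) hos
  rw [SAlpha, SClass_limit α S hlim]
  refine ⟨Order.succ (iSup os), hlim.succ_lt hsup, ?_⟩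
  rw [SClass_succ]
  exact ⟨ι, hι, xs, fun i => self_mem_starSet (zero_mem_SClass α hα S _)
    (SClass_mono α hα S (Ordinal.le_iSup os i) (hmem i)), ⟨Iso.refl _⟩⟩

lemma S_subset_SAlpha : S ⊆ SAlpha α S := by
  intro y hy
  have hlim : Order.IsSuccLimit (Cardinal.ord α) := Cardinal.isSuccLimit_ord hα.aleph0_le
  rw [SAlpha, SClass_limit α S hlim]
  refine ⟨0, hlim.pos, ?_⟩
  rw [SClass_zero]
  refine ⟨PUnit, ?_, fun _ => (y⟦((0 : ℕ) : ℤ)⟧ : C), fun _ => ⟨0, y, hy, rfl⟩,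
    ⟨coproductUniqueIso _ ≪≫ ?_⟩⟩
  · rw [Cardinal.mk_punit]
    exact Cardinal.one_lt_aleph0.trans_le hα.aleph0_le
  · rw [Nat.cast_zero]
    exact (shiftFunctorZero C ℤ).app y

lemma SAlpha_subset_aisleGen : SAlpha α S ⊆ aisleGen S :=
  SClass_subset_preaisle α S (isCocompletePreaisle_aisleGen S) (subset_aisleGen S) _

lemma SAlpha_subset_cpt (G : AlphaCompactGeneration (C := C) α) (hS : S ⊆ G.compacts) :
    SAlpha α S ⊆ G.compacts :=
  SClass_subset_cpt α S G hS _

end SAlphaLemmas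

lemma coprod_prune {ι : Type v} (xs : ι → C) (J : Set ι) (hz : ∀ i ∉ J, IsZero (xs i)) :
    Nonempty ((∐ (fun j : J => xs j) : C) ≅ (∐ xs : C)) := by
  classical
  refine ⟨⟨Sigma.desc (fun j => Sigma.ι xs j.1),
    Sigma.desc (fun i => if h : i ∈ J then Sigma.ι (fun j : J => xs j) ⟨i, h⟩ else 0), ?_, ?_⟩⟩
  · apply colimit.hom_ext
    rintro ⟨j⟩
    simp [dif_pos j.2]
  · apply colimit.hom_ext
    rintro ⟨i⟩
    by_cases h : i ∈ J
    · simp [dif_pos h]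
    · simp only [colimit.ι_desc_assoc, Discrete.functor_obj, Cofan.mk_pt, Cofan.mk_ι_app,
        dif_neg h, zero_comp, Category.comp_id]
      exact ((hz i h).eq_of_src _ _)

end Statement15Aux

namespace Statement15Aux
set_option linter.unusedSectionVars false
set_option maxHeartbeats 1000000

open Triangulated

/-- The class of objects `y` such that every morphism from an `α`-compact object to `y`
factors through an object of `S(α)`. -/
def Pset (α : Cardinal.{v}) (S : Set C) (G : AlphaCompactGeneration (C := C) α) : Set C :=
  {y | ∀ c ∈ G.compacts, ∀ φ : c ⟶ y,
    ∃ s ∈ SAlpha α S, ∃ w : c ⟶ s, ∃ p : s ⟶ y, φ = w ≫ p}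

variable {α : Cardinal.{v}} {S : Set C} {G : AlphaCompactGeneration (C := C) α}

lemma Pset_of_SAlpha {y : C} (hy : y ∈ SAlpha α S) : y ∈ Pset α S G :=
  fun _c _hc φ => ⟨y, hy, φ, 𝟙 y, (Category.comp_id φ).symm⟩

lemma Pset_iso {y y' : C} (e : y ≅ y') (hy : y ∈ Pset α S G) : y' ∈ Pset α S G := by
  intro c hc φ
  obtain ⟨s, hs, w, p, hfac⟩ := hy c hc (φ ≫ e.inv)
  refine ⟨s, hs, w, p ≫ e.hom, ?_⟩
  rw [← Category.assoc, ← hfac, Category.assoc, e.inv_hom_id, Category.comp_id]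

variable (hα : α.IsRegular) (hS : S ⊆ G.compacts)

include hα

lemma Pset_shift {y : C} (hy : y ∈ Pset α S G) : (y⟦(1 : ℤ)⟧ : C) ∈ Pset α S G := by
  intro c hc φ
  have hy' : (((y⟦(1 : ℤ)⟧)⟦(-1 : ℤ)⟧ : C)) ∈ Pset α S G :=
    Pset_iso (((shiftFunctorCompIsoId C (1 : ℤ) (-1 : ℤ) (by ring)).app y).symm) hy
  obtain ⟨s, hs, w', p', hfac⟩ := hy' (c⟦(-1 : ℤ)⟧) (G.shift_mem c hc (-1))
    ((shiftFunctor C (-1 : ℤ)).map φ)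
  set ν := shiftFunctorCompIsoId C (-1 : ℤ) (1 : ℤ) (by ring) with hν
  refine ⟨(s⟦(1 : ℤ)⟧ : C), SAlpha_shift α hα S hs,
    ν.inv.app c ≫ (shiftFunctor C (1 : ℤ)).map w',
    (shiftFunctor C (1 : ℤ)).map p' ≫ ν.hom.app (y⟦(1 : ℤ)⟧), ?_⟩
  have hnat : (shiftFunctor C (1 : ℤ)).map ((shiftFunctor C (-1 : ℤ)).map φ) ≫
      ν.hom.app (y⟦(1 : ℤ)⟧) = ν.hom.app c ≫ φ := ν.hom.naturality φ
  have : φ = ν.inv.app c ≫ (shiftFunctor C (1 : ℤ)).map ((shiftFunctor C (-1 : ℤ)).map φ) ≫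
      ν.hom.app (y⟦(1 : ℤ)⟧) := by
    rw [hnat, ← Category.assoc, ν.inv_hom_id_app, Category.id_comp]
  rw [this, hfac]
  simp only [Functor.map_comp, Category.assoc]

lemma Pset_summand {x s : C} (hs : s ∈ Pset α S G) (i : x ⟶ s) (r : s ⟶ x)
    (hir : i ≫ r = 𝟙 x) : x ∈ Pset α S G := by
  intro c hc φ
  obtain ⟨σ, hσ, w, p, hfac⟩ := hs c hc (φ ≫ i)
  refine ⟨σ, hσ, w, p ≫ r, ?_⟩
  rw [← Category.assoc, ← hfac, Category.assoc, hir, Category.comp_id]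

lemma Pset_coprod {ι : Type v} (xs : ι → C) (hxs : ∀ i, xs i ∈ Pset α S G) :
    (∐ xs : C) ∈ Pset α S G := by
  classical
  intro c hc φ
  obtain ⟨J, hJ, ts, hts, htsz, g, fs, hfac⟩ := G.factor c hc xs φ
  have step : ∀ i, ∃ (σ : C) (_ : σ ∈ SAlpha α S) (_ : i ∉ J → IsZero σ)
      (w : ts i ⟶ σ) (q : σ ⟶ xs i), fs i = w ≫ q := by
    intro i
    by_cases hi : i ∈ J
    · obtain ⟨σ, hσ, w, q, h⟩ := hxs i (ts i) (hts i) (fs i)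
      exact ⟨σ, hσ, fun h' => absurd hi h', w, q, h⟩
    · exact ⟨0, zero_mem_SAlpha α hα S, fun _ => isZero_zero C, 0, 0,
        by rw [zero_comp]; exact ((htsz i hi).eq_of_src _ _)⟩
  choose σ hσ hσz w q hwq using step
  refine ⟨(∐ σ : C), ?_, g ≫ Limits.Sigma.map w, Limits.Sigma.map q, ?_⟩
  · obtain ⟨e⟩ := coprod_prune σ J hσz
    exact SAlpha_iso α hα S e (SAlpha_coprod α hα S hJ _ (fun j => hσ j.1))
  · rw [hfac, show fs = fun i => w i ≫ q i from funext hwq, Category.assoc,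
      Limits.Sigma.map_comp_map]

include hS

lemma Pset_ext {T : Triangle C} (hT : T ∈ distTriang C) (hP1 : T.obj₁ ∈ Pset α S G)
    (hP3 : T.obj₃ ∈ Pset α S G) : T.obj₂ ∈ Pset α S G := by
  intro c hc φ
  -- factor `φ ≫ T.mor₂` through an object of `S(α)`
  obtain ⟨sb, hsb, wb, pb, hb⟩ := hP3 c hc (φ ≫ T.mor₂)
  -- complete `wb` to a triangle and invert-rotate it
  obtain ⟨k, u, dk, hTk⟩ := distinguished_cocone_triangle wb
  have hTk' : (Triangle.mk wb u dk).invRotate ∈ distTriang C :=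
    inv_rot_of_distTriang _ hTk
  set γ : (k⟦(-1 : ℤ)⟧ : C) ⟶ c := (Triangle.mk wb u dk).invRotate.mor₁ with hγ
  have hγwb : γ ≫ wb = 0 := comp_distTriang_mor_zero₁₂ _ hTk'
  have hc' : (k⟦(-1 : ℤ)⟧ : C) ∈ G.compacts :=
    G.shift_mem k (G.cone_mem _ hTk hc (SAlpha_subset_cpt α hα S G hS hsb)) (-1)
  -- `γ ≫ φ` kills `T.mor₂`, hence comes from `T.obj₁`
  have h1 : (γ ≫ φ) ≫ T.mor₂ = 0 := by
    rw [Category.assoc, hb, ← Category.assoc, hγwb, zero_comp]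
  obtain ⟨η, hη⟩ := Triangle.coyoneda_exact₂ T hT (γ ≫ φ) h1
  -- factor `η` through an object of `S(α)`
  obtain ⟨sa, hsa, wa, pa, ha⟩ := hP1 _ hc' η
  -- the canonical map into the biproduct, and its cone `z`
  set m : (k⟦(-1 : ℤ)⟧ : C) ⟶ (sa ⊞ c : C) := biprod.lift (-wa) γ with hm
  obtain ⟨z, e, dz, hTz⟩ := distinguished_cocone_triangle m
  -- octahedron on `m ≫ biprod.snd = γ`
  have comm : m ≫ (biprod.snd : (sa ⊞ c : C) ⟶ c) = γ := biprod.lift_snd _ _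
  have h23 : Triangle.mk (biprod.snd : (sa ⊞ c : C) ⟶ c) (0 : c ⟶ (sa⟦(1 : ℤ)⟧ : C))
      (-((biprod.inl : sa ⟶ (sa ⊞ c : C))⟦(1 : ℤ)⟧')) ∈ distTriang C :=
    rot_of_distTriang _ (binaryBiproductTriangle_distinguished sa c)
  have h13 : Triangle.mk γ (Triangle.mk wb u dk).invRotate.mor₂
      (Triangle.mk wb u dk).invRotate.mor₃ ∈ distTriang C := hTk'
  have oct := Triangulated.someOctahedron comm hTz h23 h13
  -- `z` belongs to `S(α)`
  have hzmem : z ∈ SAlpha α S := by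
    refine SAlpha_star α hα S (inv_rot_of_distTriang _ oct.mem) ?_ hsb
    exact SAlpha_iso α hα S
      (((shiftFunctorCompIsoId C (1 : ℤ) (-1 : ℤ) (by ring)).app sa).symm) hsa
  -- the factorization of `φ` through `z`
  set Φ : (sa ⊞ c : C) ⟶ T.obj₂ := biprod.desc (pa ≫ T.mor₁) φ with hΦ
  have hmΦ : m ≫ Φ = 0 := by
    rw [hm, hΦ, biprod.lift_desc, hη, ha]
    simp [Category.assoc]
  obtain ⟨pz, hpz⟩ := Triangle.yoneda_exact₂ _ hTz Φ hmΦ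
  refine ⟨z, hzmem, biprod.inr ≫ e, pz, ?_⟩
  have : (biprod.inr : c ⟶ (sa ⊞ c : C)) ≫ Φ = φ := biprod.inr_desc _ _
  rw [← this, hpz]
  exact (Category.assoc _ _ _).symm

lemma Pset_isCocompletePreaisle : IsCocompletePreaisle (Pset α S G) := by
  refine ⟨⟨Pset_of_SAlpha (zero_mem_SAlpha α hα S), ?_, ?_, ?_⟩, ?_⟩
  · exact fun s hs => Pset_shift hα hs
  · exact fun T hT h1 h3 => Pset_ext hα hS hT h1 h3
  · exact fun x s hs i r hir => Pset_summand hα hs i r hir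
  · exact fun xs hxs => Pset_coprod hα xs hxs

lemma aisleGen_subset_Pset : aisleGen S ⊆ Pset α S G :=
  aisleGen_sub S (Pset_isCocompletePreaisle hα hS)
    (fun _y hy => Pset_of_SAlpha (S_subset_SAlpha α hα S hy))

/-- The strong factorization lemma: a morphism from a compact object to a compact object
over `y` which dies in `y` can be killed by enlarging inside `S(α)`. -/
lemma strong_factor {y : C} (hy : y ∈ Pset α S G) {c s : C} (hc : c ∈ G.compacts)
    (hs : s ∈ G.compacts) (p : s ⟶ y) (δ : c ⟶ s) (h0 : δ ≫ p = 0) :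
    ∃ s' ∈ SAlpha α S, ∃ j : s ⟶ s', ∃ p' : s' ⟶ y, p = j ≫ p' ∧ δ ≫ j = 0 := by
  obtain ⟨k, q, dk, hTk⟩ := distinguished_cocone_triangle δ
  obtain ⟨pt, hpt⟩ := Triangle.yoneda_exact₂ _ hTk p h0
  obtain ⟨s', hs', w, p', hfac⟩ := hy k (G.cone_mem _ hTk hc hs) pt
  refine ⟨s', hs', q ≫ w, p', ?_, ?_⟩
  · rw [hpt, hfac]
    exact (Category.assoc _ _ _).symm
  · rw [← Category.assoc, show δ ≫ q = 0 from comp_distTriang_mor_zero₁₂ _ hTk, zero_comp]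

end Statement15Aux

namespace Statement15Aux
set_option linter.unusedSectionVars false
set_option maxHeartbeats 1000000

theorem statement15_aux (S : Set C) (x t : C)
    (α : Cardinal.{v}) (hα : α.IsRegular)
    (G : AlphaCompactGeneration (C := C) α)
    (hS : S ⊆ G.compacts) (hx : x ∈ G.compacts) :
    Small.{v} (HQuot (aisleGen S) x t) ∧
    (∀ q : HQuot (aisleGen S) x t,
      ∃ (s' : C) (hs' : s' ∈ aisleGen S) (_ : s' ∈ SAlpha α S) (f : x ⟶ s') (g : s' ⟶ t),
        q = Quot.mk _ ⟨s', hs', f, g⟩) ∧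
    (∀ h h' : HTilde (aisleGen S) x t, h.s ∈ SAlpha α S → h'.s ∈ SAlpha α S →
      (HRel (aisleGen S) h h' ↔
        ∃ (s'' : C) (_ : s'' ∈ SAlpha α S) (u : h.s ⟶ s'') (u' : h'.s ⟶ s'')
          (v : s'' ⟶ t), h.f ≫ u = h'.f ≫ u' ∧ u ≫ v = h.g ∧ u' ≫ v = h'.g)) := by
  classical
  have hsub : aisleGen S ⊆ Pset α S G := aisleGen_subset_Pset hα hS
  have hAaisle : SAlpha α S ⊆ aisleGen S := SAlpha_subset_aisleGen α hα S
  have hAcpt : SAlpha α S ⊆ G.compacts := SAlpha_subset_cpt α hα S G hS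
  -- every class has a representative with middle object in `S(α)`
  have key : ∀ q : HQuot (aisleGen S) x t,
      ∃ (s' : C) (hs' : s' ∈ aisleGen S) (_ : s' ∈ SAlpha α S) (f : x ⟶ s') (g : s' ⟶ t),
        q = Quot.mk _ ⟨s', hs', f, g⟩ := by
    intro q
    obtain ⟨h0, rfl⟩ := Quot.exists_rep q
    obtain ⟨s, hs, f, g⟩ := h0
    obtain ⟨s₁, hs₁, w, p, hfac⟩ := hsub hs x hx f
    refine ⟨s₁, hAaisle hs₁, hs₁, w, p ≫ g, ?_⟩
    exact Quot.sound ⟨s, hs, 𝟙 s, p, g, by rw [Category.comp_id]; exact hfac,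
      Category.id_comp g, rfl⟩
  refine ⟨?_, key, ?_⟩
  · -- smallness
    obtain ⟨ι, F, hF⟩ := G.essentiallySmall
    have hz0 : (0 : C) ∈ aisleGen S := zero_mem_aisleGen S
    let fn : ((i : ι) × ((x ⟶ F i) × (F i ⟶ t))) → HQuot (aisleGen S) x t := fun a =>
      if h : F a.1 ∈ aisleGen S then Quot.mk _ ⟨F a.1, h, a.2.1, a.2.2⟩
      else Quot.mk _ ⟨0, hz0, 0, 0⟩
    refine small_of_surjective (f := fn) ?_
    intro q
    obtain ⟨s', hs', hsA, f, g, rfl⟩ := key q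
    obtain ⟨i, ⟨e⟩⟩ := hF s' (hAcpt hsA)
    have hFi : F i ∈ aisleGen S := aisleGen_iso e hs'
    refine ⟨⟨i, f ≫ e.hom, e.inv ≫ g⟩, ?_⟩
    simp only [fn, dif_pos hFi]
    refine (dif_pos hFi).trans ?_
    apply Quot.sound
    exact ⟨F i, hFi, 𝟙 _, e.hom, e.inv ≫ g, by rw [Category.comp_id],
      Category.id_comp _, by rw [← Category.assoc, e.hom_inv_id, Category.id_comp]⟩
  · -- the relation can be realized inside `S(α)`
    intro h h' hA hA'
    constructor
    · rintro ⟨s'', hs'', u, u', v, h1, h2, h3⟩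
      have hbp : (h.s ⊞ h'.s : C) ∈ G.compacts :=
        cpt_obj₂ G (binaryBiproductTriangle_distinguished h.s h'.s) (hAcpt hA) (hAcpt hA')
      set δ : x ⟶ (h.s ⊞ h'.s : C) := h.f ≫ biprod.inl - h'.f ≫ biprod.inr with hδ
      set Φ : (h.s ⊞ h'.s : C) ⟶ s'' := biprod.desc u u' with hΦ
      have hδΦ : δ ≫ Φ = 0 := by
        rw [hδ, hΦ, Preadditive.sub_comp, Category.assoc, Category.assoc,
          biprod.inl_desc, biprod.inr_desc, h1, sub_self]
      obtain ⟨s₃, hs₃, j, p₃, hj1, hj2⟩ :=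
        strong_factor hα hS (hsub hs'') hx hbp Φ δ hδΦ
      refine ⟨s₃, hs₃, biprod.inl ≫ j, biprod.inr ≫ j, p₃ ≫ v, ?_, ?_, ?_⟩
      · have h4 : (h.f ≫ biprod.inl - h'.f ≫ biprod.inr) ≫ j = 0 := hj2
        rw [Preadditive.sub_comp, sub_eq_zero, Category.assoc, Category.assoc] at h4
        exact h4
      · calc (biprod.inl ≫ j) ≫ (p₃ ≫ v) = biprod.inl ≫ (j ≫ p₃) ≫ v := by
              simp only [Category.assoc]
          _ = biprod.inl ≫ Φ ≫ v := by rw [← hj1]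
          _ = u ≫ v := by rw [hΦ, ← Category.assoc, biprod.inl_desc]
          _ = h.g := h2
      · calc (biprod.inr ≫ j) ≫ (p₃ ≫ v) = biprod.inr ≫ (j ≫ p₃) ≫ v := by
              simp only [Category.assoc]
          _ = u' ≫ v := by rw [← hj1, hΦ, ← Category.assoc, biprod.inr_desc]
          _ = h'.g := h3
    · rintro ⟨s'', hs'', u, u', v, h1, h2, h3⟩
      exact ⟨s'', hAaisle hs'', u, u', v, h1, h2, h3⟩

end Statement15Aux
/-- for `𝒮 = ⟨S⟩^{≤0}`, the class `H_𝒮(x,t)` is a small set: choosing a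
regular cardinal `α` with `T` α-compactly generated and `S ∪ {x} ⊆ T^α`, every class in
`H_𝒮(x,t)` is represented by a pair `x ⟶ s' ⟶ t` with `s' ∈ S(α)`, and two such
representatives with middle objects in `S(α)` are equivalent if and only if they can be
connected by a commutative diagram through an object `s'' ∈ S(α)`. -/
theorem statement15 (S : Set C) (x t : C)
    (α : Cardinal.{v}) (hα : α.IsRegular)
    (G : AlphaCompactGeneration (C := C) α)
    (hS : S ⊆ G.compacts) (hx : x ∈ G.compacts) :
    Small.{v} (HQuot (aisleGen S) x t) ∧
    (∀ q : HQuot (aisleGen S) x t,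
      ∃ (s' : C) (hs' : s' ∈ aisleGen S) (_ : s' ∈ SAlpha α S) (f : x ⟶ s') (g : s' ⟶ t),
        q = Quot.mk _ ⟨s', hs', f, g⟩) ∧
    (∀ h h' : HTilde (aisleGen S) x t, h.s ∈ SAlpha α S → h'.s ∈ SAlpha α S →
      (HRel (aisleGen S) h h' ↔
        ∃ (s'' : C) (_ : s'' ∈ SAlpha α S) (u : h.s ⟶ s'') (u' : h'.s ⟶ s'')
          (v : s'' ⟶ t), h.f ≫ u = h'.f ≫ u' ∧ u ≫ v = h.g ∧ u' ≫ v = h'.g)) :=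
  Statement15Aux.statement15_aux S x t α hα G hS hx
end
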